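/- arXiv:2005.03102 — 8 statements merged into one kernel-verified Lean document; each statement's English description precedes it below -/
import Mathlib

section
/- Let Σ be a finite alphabet of size σ ≥ 2, let b ≥ 2 and k ≥ 1, let F_{p,p+k} denote the set of all sequences of length p+k over Σ having period p, and let F = ⋃_{p=1}^{b-1} F_{p,p+k}. Then for every n, the following three sets of sequences of length n over Σ coincide: (1) the set A(n;F) of sequences avoiding F, (2) the set C_DB(n,b,k) of (b,k)-constrained de Bruijn sequences, and (3) the intersection ⋂_{i=1}^{b-1} C_LP(n, i+k-1, i). -/
/-- The window `s[i, i+k-1]` (0-based start `i`, length `k`). -/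
def window {A : Type*} (s : List A) (i k : ℕ) : List A := (s.drop i).take k

/-- `s` has period `p`: `s_i = s_{i+p}` whenever both indices are in range. -/
def HasPeriod {A : Type*} (s : List A) (p : ℕ) : Prop :=
  ∀ i : ℕ, i + p < s.length → s[i]? = s[i + p]?

/-- `s` is a `(b,k)`-constrained de Bruijn sequence: any two windows of length `k`
starting at distinct positions at distance at most `b-1` are distinct. -/
def IsCDB {A : Type*} (s : List A) (b k : ℕ) : Prop :=
  ∀ i j : ℕ, i < j → j - i ≤ b - 1 → j + k ≤ s.length → window s i k ≠ window s j k

/-- `s` is `m`-limited length for period-`p` substrings. -/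
def IsLP {A : Type*} (s : List A) (m p : ℕ) : Prop :=
  ∀ t : List A, t <:+: s → HasPeriod t p → t.length ≤ m

/-- `s` avoids every pattern in `F`. -/
def Avoids {A : Type*} (s : List A) (F : Set (List A)) : Prop :=
  ∀ t ∈ F, ¬ t <:+: s

lemma window_getElem? {A : Type*} (s : List A) (i k j : ℕ) (hj : j < k) :
    (window s i k)[j]? = s[i + j]? := by
  simp [window, List.getElem?_take, hj, List.getElem?_drop]

lemma window_length {A : Type*} (s : List A) (i k : ℕ) (h : i + k ≤ s.length) :
    (window s i k).length = k := by
  simp [window]; omega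

lemma window_infix {A : Type*} (s : List A) (i k : ℕ) :
    window s i k <:+: s :=
  ((List.take_prefix k (s.drop i)).isInfix).trans (List.drop_suffix i s).isInfix

lemma win_eq_iff {A : Type*} (s : List A) (i p k : ℕ)
    (h : i + p + k ≤ s.length) :
    window s i k = window s (i + p) k ↔ HasPeriod (window s i (p + k)) p := by
  have hlt : (window s i (p + k)).length = p + k :=
    window_length _ _ _ (by omega)
  constructor
  · intro he j hj
    rw [hlt] at hj
    have hjk : j < k := by omega
    have h2 := congrArg (fun l => l[j]?) he
    rw [window_getElem? s i k j hjk, window_getElem? s (i + p) k j hjk] at h2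
    rw [window_getElem? s i (p + k) j (by omega),
      window_getElem? s i (p + k) (j + p) (by omega), h2]
    congr 1
    omega
  · intro hper
    apply List.ext_getElem?
    intro j
    by_cases hj : j < k
    · rw [window_getElem? s i k j hj, window_getElem? s (i + p) k j hj]
      have h2 := hper j (by rw [hlt]; omega)
      rw [window_getElem? s i (p + k) j (by omega),
        window_getElem? s i (p + k) (j + p) (by omega)] at h2
      rw [h2]
      congr 1
      omega
    · rw [List.getElem?_eq_none (by rw [window_length s i k (by omega)]; omega),
        List.getElem?_eq_none (by rw [window_length s (i + p) k (by omega)]; omega)]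

lemma HasPeriod.take {A : Type*} {t : List A} {p : ℕ} (h : HasPeriod t p) (m : ℕ) :
    HasPeriod (t.take m) p := by
  intro j hj
  simp only [List.length_take, lt_min_iff] at hj
  rw [List.getElem?_take, List.getElem?_take, if_pos (by omega), if_pos (by omega)]
  exact h j (by omega)

lemma factor_iff {A : Type*} (s : List A) (p k : ℕ) :
    (∃ t : List A, t <:+: s ∧ t.length = p + k ∧ HasPeriod t p) ↔
    ∃ i, i + p + k ≤ s.length ∧ window s i k = window s (i + p) k := by
  constructor
  · rintro ⟨t, ⟨l, r, hlr⟩, hlen, hper⟩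
    have hs : s = l ++ (t ++ r) := by rw [← hlr, List.append_assoc]
    have hb : l.length + p + k ≤ s.length := by
      rw [hs]; simp; omega
    refine ⟨l.length, hb, ?_⟩
    have ht : window s l.length (p + k) = t := by
      rw [hs, window, List.drop_left, List.take_left' hlen]
    rw [win_eq_iff s l.length p k hb, ht]
    exact hper
  · rintro ⟨i, hb, he⟩
    exact ⟨window s i (p + k), window_infix s i (p + k),
      window_length _ _ _ (by omega), (win_eq_iff s i p k hb).mp he⟩

theorem stmt0 {A : Type*} [Fintype A] (hA : 2 ≤ Fintype.card A)
    (b k n : ℕ) (hb : 2 ≤ b) (hk : 1 ≤ k)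
    (F : Set (List A))
    (hF : F = {t : List A | ∃ p, 1 ≤ p ∧ p ≤ b - 1 ∧ t.length = p + k ∧ HasPeriod t p}) :
    {s : List A | s.length = n ∧ Avoids s F}
        = {s : List A | s.length = n ∧ IsCDB s b k}
    ∧ {s : List A | s.length = n ∧ IsCDB s b k}
        = ⋂ i ∈ Finset.Icc 1 (b - 1), {s : List A | s.length = n ∧ IsLP s (i + k - 1) i} := by
  constructor
  · ext s
    simp only [Set.mem_setOf_eq]
    constructor
    · rintro ⟨hl, hav⟩
      refine ⟨hl, ?_⟩
      intro i j hij hd hjk heq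
      have hji : j = i + (j - i) := by omega
      obtain ⟨t, hti, htl, htp⟩ := (factor_iff s (j - i) k).mpr
        ⟨i, by omega, by rw [← hji]; exact heq⟩
      exact hav t (by rw [hF]; exact ⟨j - i, by omega, by omega, htl, htp⟩) hti
    · rintro ⟨hl, hcdb⟩
      refine ⟨hl, ?_⟩
      intro t htF hti
      rw [hF] at htF
      obtain ⟨p, hp1, hpb, htl, htp⟩ := htF
      obtain ⟨i, hib, heq⟩ := (factor_iff s p k).mp ⟨t, hti, htl, htp⟩
      exact hcdb i (i + p) (by omega) (by omega) (by omega) heq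
  · ext s
    simp only [Set.mem_setOf_eq, Set.mem_iInter, Finset.mem_Icc]
    constructor
    · rintro ⟨hl, hcdb⟩ i hi
      refine ⟨hl, ?_⟩
      intro t hti htp
      by_contra hlen
      push_neg at hlen
      have h1 : t.take (i + k) <:+: s :=
        ((List.take_prefix (i + k) t).isInfix).trans hti
      have h2 : (t.take (i + k)).length = i + k := by simp; omega
      obtain ⟨j, hjb, heq⟩ := (factor_iff s i k).mp ⟨_, h1, h2, htp.take _⟩
      exact hcdb j (j + i) (by omega) (by omega) (by omega) heq
    · intro h
      have hlen := (h 1 ⟨le_refl _, by omega⟩).1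
      refine ⟨hlen, ?_⟩
      intro a j haj hd hjk heq
      have hja : j = a + (j - a) := by omega
      obtain ⟨t, hti, htl, htp⟩ := (factor_iff s (j - a) k).mpr
        ⟨a, by omega, by rw [← hja]; exact heq⟩
      have := (h (j - a) ⟨by omega, by omega⟩).2 t hti htp
      omega
end

section
/- Let Σ be a finite alphabet of size σ ≥ 2, let b ≥ 1, and let n ≥ b. Then the number of (b,1)-constrained de Bruijn sequences of length n over Σ is 0 if b > σ, and equals C(σ,b)·b!·(σ−b+1)^{n−b} if b ≤ σ, where C(σ,b) is the binomial coefficient. -/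
section Aux

open Classical

variable {A : Type*}

/-- Pointwise form of the (b,1)-constraint. -/
def Pd (s : List A) (b : ℕ) : Prop :=
  ∀ i j : ℕ, (hij : i < j) → (hj : j < s.length) → j < i + b →
    s[i]'(Nat.lt_trans hij hj) ≠ s[j]

lemma window_one {s : List A} {i : ℕ} (hi : i < s.length) :
    window s i 1 = [s[i]] := by
  unfold window
  rw [List.drop_eq_getElem_cons hi]
  rfl

lemma isCDB_iff {s : List A} {b : ℕ} (hb : 1 ≤ b) :
    IsCDB s b 1 ↔ Pd s b := by
  constructor
  · intro H i j hij hj hjb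
    have h := H i j hij (by omega) (by omega)
    intro he
    apply h
    rw [window_one (Nat.lt_trans hij hj), window_one hj, he]
  · intro H i j hij hd hjk
    have hj : j < s.length := by omega
    have hi : i < s.length := Nat.lt_trans hij hj
    rw [window_one hi, window_one hj]
    intro he
    exact H i j hij hj (by omega) (by simpa using he)

lemma nodup_take_of_Pd {s : List A} {b m : ℕ} (H : Pd s b) (hm : m ≤ b) :
    (s.take m).Nodup := by
  rw [List.Nodup, List.pairwise_iff_getElem]
  intro i j hi hj hij
  rw [List.getElem_take, List.getElem_take]
  have hjl : j < s.length := by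
    have := hj; rw [List.length_take] at this; omega
  have hjm : j < m := by
    have := hj; rw [List.length_take] at this; omega
  exact H i j hij hjl (by omega)

variable [Fintype A]

lemma finite_setOf_len (n : ℕ) : {s : List A | s.length = n}.Finite := by
  apply (Set.finite_range (fun f : Fin n → A => List.ofFn f)).subset
  rintro s (hs : s.length = n)
  refine ⟨fun i => s[(i : ℕ)]'(by omega), ?_⟩
  apply List.ext_getElem (by simp [hs])
  intro i h1 h2
  simp

lemma finite_S (n b : ℕ) : {s : List A | s.length = n ∧ Pd s b}.Finite :=
  (finite_setOf_len n).subset fun s hs => hs.1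

/-- The base case: sequences of length `b`. -/
lemma card_base (b : ℕ) :
    Nat.card {s : List A | s.length = b ∧ Pd s b}
      = (Fintype.card A).descFactorial b := by
  have e : {s : List A | s.length = b ∧ Pd s b} ≃ (Fin b ↪ A) := by
    refine
      { toFun := fun s => ⟨fun i => (s : List A)[(i : ℕ)]'(by
          have := s.2.1; omega), ?_⟩
        invFun := fun f => ⟨List.ofFn f, by simp, ?_⟩
        left_inv := ?_, right_inv := ?_ }
    · intro i j hne
      by_contra hij
      have hvne : (i : ℕ) ≠ (j : ℕ) := fun hh => hij (Fin.ext hh)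
      rcases Nat.lt_or_ge (i : ℕ) (j : ℕ) with h | h
      · exact s.2.2 i j h (by have := s.2.1; omega) (by omega) hne
      · exact s.2.2 j i (by omega) (by have := s.2.1; omega) (by omega) hne.symm
    · intro i j hij hj hjb he
      rw [List.getElem_ofFn, List.getElem_ofFn] at he
      have := f.injective he
      have : i = j := by
        have := congrArg Fin.val this
        simpa using this
      omega
    · rintro ⟨s, hlen, hP⟩
      apply Subtype.ext
      apply List.ext_getElem (by simp [hlen])
      intro i h1 h2
      simp
      rfl
    · intro f
      apply DFunLike.ext
      intro i
      simp
  rw [Nat.card_congr e, Nat.card_eq_fintype_card, Fintype.card_embedding_eq,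
    Fintype.card_fin]

noncomputable instance fiberFintype (t : List A) (b : ℕ) :
    Fintype {x : A // ∀ j : ℕ, (hj : j < t.length) → j < b - 1 → x ≠ t[j]} :=
  Fintype.ofFinite _

/-- Cardinality of the fiber of admissible next symbols. -/
lemma card_fiber {t : List A} {b n : ℕ} (hb : 1 ≤ b) (hn : b ≤ n)
    (hlen : t.length = n) (hP : Pd t b) :
    Nat.card {x : A // ∀ j : ℕ, (hj : j < t.length) → j < b - 1 → x ≠ t[j]}
      = Fintype.card A - b + 1 := by
  classical
  have hbσ : b ≤ Fintype.card A := by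
    have hnd : (t.take b).Nodup := nodup_take_of_Pd hP le_rfl
    have hlt : (t.take b).length = b := by simp [hlen]; omega
    calc b = (t.take b).toFinset.card := by
            rw [List.toFinset_card_of_nodup hnd, hlt]
      _ ≤ Fintype.card A := Finset.card_le_univ _
  have hset : {x : A | ∀ j : ℕ, (hj : j < t.length) → j < b - 1 → x ≠ t[j]}
      = ((t.take (b-1)).toFinset : Finset A)ᶜ := by
    ext x
    simp only [Set.mem_setOf_eq, Finset.coe_compl, Set.mem_compl_iff,
      Finset.mem_coe, List.mem_toFinset]
    constructor
    · intro h hx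
      rw [List.mem_iff_getElem] at hx
      obtain ⟨j, hj, hjx⟩ := hx
      have hjl : j < t.length := by
        have := hj; rw [List.length_take] at this; omega
      have hjb : j < b - 1 := by
        have := hj; rw [List.length_take] at this; omega
      rw [List.getElem_take] at hjx
      exact h j hjl hjb hjx.symm
    · intro h j hj hjb he
      apply h
      rw [List.mem_iff_getElem]
      exact ⟨j, by rw [List.length_take]; omega, by rw [List.getElem_take]; exact he.symm⟩
  have : Nat.card {x : A // ∀ j : ℕ, (hj : j < t.length) → j < b - 1 → x ≠ t[j]}
      = Set.ncard {x : A | ∀ j : ℕ, (hj : j < t.length) → j < b - 1 → x ≠ t[j]} :=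
    Nat.card_coe_set_eq _
  rw [this, hset, Set.ncard_coe_finset, Finset.card_compl,
    List.toFinset_card_of_nodup (nodup_take_of_Pd hP (by omega))]
  rw [List.length_take]
  omega

/-- The recursion step. -/
lemma card_succ {b n : ℕ} (hb : 1 ≤ b) (hn : b ≤ n) :
    Nat.card {s : List A | s.length = n + 1 ∧ Pd s b}
      = Nat.card {s : List A | s.length = n ∧ Pd s b} * (Fintype.card A - b + 1) := by
  classical
  have e : {s : List A | s.length = n + 1 ∧ Pd s b} ≃
      Σ t : {t : List A | t.length = n ∧ Pd t b},
        {x : A // ∀ j : ℕ, (hj : j < (t : List A).length) → j < b - 1 → x ≠ (t : List A)[j]} := by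
    refine
      { toFun := fun s =>
          ⟨⟨(s : List A).tail, ?_, ?_⟩,
            ⟨(s : List A).head (by
              have := s.2.1
              intro h; rw [h] at this; simp at this), ?_⟩⟩
        invFun := fun p => ⟨(p.2 : A) :: (p.1 : List A), ?_, ?_⟩
        left_inv := ?_, right_inv := ?_ }
    · have := s.2.1; simp [this]
    · intro i j hij hj hjb
      rw [List.getElem_tail, List.getElem_tail]
      have hjl : j + 1 < (s : List A).length := by
        have := hj; rw [List.length_tail] at this; omega
      exact s.2.2 (i+1) (j+1) (by omega) hjl (by omega)
    · intro j hj hjb he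
      have hne : (s : List A) ≠ [] := by
        have := s.2.1; intro h; rw [h] at this; simp at this
      rw [List.head_eq_getElem, List.getElem_tail] at he
      have hjl : j + 1 < (s : List A).length := by
        have := hj; rw [List.length_tail] at this; omega
      exact s.2.2 0 (j+1) (by omega) hjl (by omega) he
    · have := p.1.2.1; simp [this]
    · intro i j hij hj hjb
      match j, hij with
      | (j+1), _ =>
        rw [List.getElem_cons_succ]
        have hjl : j < (p.1 : List A).length := by
          simp at hj; omega
        match i with
        | 0 =>
          rw [List.getElem_cons_zero]
          exact p.2.2 j hjl (by omega)
        | (i+1) =>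
          rw [List.getElem_cons_succ]
          exact p.1.2.2 i j (by omega) hjl (by omega)
    · rintro ⟨s, hlen, hP⟩
      apply Subtype.ext
      simp
    · rintro ⟨⟨t, ht⟩, ⟨x, hx⟩⟩
      rfl
  rw [Nat.card_congr e]
  have hfinS : {s : List A | s.length = n ∧ Pd s b}.Finite := finite_S n b
  haveI : Fintype {t : List A | t.length = n ∧ Pd t b} := hfinS.fintype
  rw [Nat.card_eq_fintype_card, Fintype.card_sigma]
  trans (Finset.univ : Finset {t : List A | t.length = n ∧ Pd t b}).card * (Fintype.card A - b + 1)
  · apply Finset.sum_const_nat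
    intro t _
    rw [← Nat.card_eq_fintype_card]
    exact card_fiber hb hn t.2.1 t.2.2
  · rw [Finset.card_univ, Nat.card_eq_fintype_card]

lemma card_S {b : ℕ} (hb : 1 ≤ b) :
    ∀ n, b ≤ n →
      Nat.card {s : List A | s.length = n ∧ Pd s b}
        = (Fintype.card A).descFactorial b * (Fintype.card A - b + 1) ^ (n - b) := by
  intro n hn
  induction n, hn using Nat.le_induction with
  | base =>
    simpa using card_base b
  | succ n hn ih =>
    rw [card_succ hb hn, ih]
    have : n + 1 - b = (n - b) + 1 := by omega
    rw [this, pow_succ, mul_assoc]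

end Aux

theorem stmt6 {A : Type*} [Fintype A] (hA : 2 ≤ Fintype.card A) (b n : ℕ)
    (hb : 1 ≤ b) (hn : b ≤ n) :
    {s : List A | s.length = n ∧ IsCDB s b 1}.ncard
      = if Fintype.card A < b then 0
        else (Fintype.card A).choose b * b.factorial * (Fintype.card A - b + 1) ^ (n - b) := by
  have hset : {s : List A | s.length = n ∧ IsCDB s b 1}
      = {s : List A | s.length = n ∧ Pd s b} := by
    ext s
    simp only [Set.mem_setOf_eq]
    exact and_congr_right fun _ => isCDB_iff hb
  rw [hset, ← Nat.card_coe_set_eq, card_S hb n hn]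
  rcases lt_or_ge (Fintype.card A) b with h | h
  · rw [if_pos h, Nat.descFactorial_eq_zero_iff_lt.mpr h, zero_mul]
  · rw [if_neg (by omega), Nat.descFactorial_eq_factorial_mul_choose, mul_comm (b.factorial)]
end

section
/- Let Σ be a finite alphabet of size σ ≥ 2, and let b, k, n be positive integers with b < k. Then the number of (b,k)-constrained de Bruijn sequences of length n over Σ satisfies |C_DB(n,b,k)| ≥ σ^n · (1 − (b−1)·n·σ^{−k}). -/
section Aux

variable {A : Type*} [Fintype A]

lemma lenSet_finite (m : ℕ) : {s : List A | s.length = m}.Finite := by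
  have h : Finite ↑{s : List A | s.length = m} :=
    inferInstanceAs (Finite (List.Vector A m))
  exact Set.toFinite _

lemma lenSet_ncard (m : ℕ) :
    {s : List A | s.length = m}.ncard = Fintype.card A ^ m := by
  rw [← Nat.card_coe_set_eq,
    show Nat.card ↑{s : List A | s.length = m} = Nat.card (List.Vector A m) from rfl,
    Nat.card_eq_fintype_card]
  exact card_vector m

omit [Fintype A] in
lemma window_eq_pointwise {s : List A} {i j k : ℕ}
    (hw : window s i k = window s j k) {t : ℕ} (ht : t < k) :
    s[i + t]? = s[j + t]? := by
  have h := congrArg (fun l : List A => l[t]?) hw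
  simpa [window, List.getElem?_take, ht, List.getElem?_drop] using h

lemma ncard_biUnion_le {ι α : Type*} (P : Finset ι) (f : ι → Set α) :
    (⋃ p ∈ P, f p).ncard ≤ ∑ p ∈ P, (f p).ncard := by
  classical
  induction P using Finset.induction_on with
  | empty => simp
  | @insert a P ha ih =>
      rw [Finset.set_biUnion_insert, Finset.sum_insert ha]
      exact le_trans (Set.ncard_union_le _ _) (by gcongr)

lemma bad_card (n i j k : ℕ) (hij : i < j) (hjk : j + k ≤ n) :
    {s : List A | s.length = n ∧ window s i k = window s j k}.ncard
      ≤ Fintype.card A ^ (n - k) := by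
  rw [← lenSet_ncard (A := A) (n - k)]
  refine Set.ncard_le_ncard_of_injOn (fun s => s.take j ++ s.drop (j + k)) ?_ ?_ (lenSet_finite _)
  · rintro s ⟨hl, -⟩
    simp only [Set.mem_setOf_eq, List.length_append, List.length_take, List.length_drop, hl]
    omega
  · rintro s ⟨hs, hws⟩ s' ⟨hs', hws'⟩ heq
    have hlen : (s.take j).length = (s'.take j).length := by
      simp only [List.length_take, hs, hs']
    obtain ⟨h1, h2⟩ := List.append_inj heq hlen
    have key : ∀ m : ℕ, s[m]? = s'[m]? := by
      intro m
      induction m using Nat.strong_induction_on with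
      | _ m ih =>
        rcases lt_or_ge m j with hmj | hmj
        · have e := congrArg (fun l : List A => l[m]?) h1
          simpa [List.getElem?_take, hmj] using e
        · rcases lt_or_ge m (j + k) with hmjk | hmjk
          · -- use periodicity
            have ht : m - j < k := by omega
            have e1 : s[i + (m - j)]? = s[j + (m - j)]? := window_eq_pointwise hws ht
            have e2 : s'[i + (m - j)]? = s'[j + (m - j)]? := window_eq_pointwise hws' ht
            have hidx : j + (m - j) = m := by omega
            have hlt : i + (m - j) < m := by omega
            rw [hidx] at e1 e2
            rw [← e1, ← e2]
            exact ih _ hlt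
          · have e := congrArg (fun l : List A => l[m - (j + k)]?) h2
            simp only [List.getElem?_drop] at e
            have hidx : j + k + (m - (j + k)) = m := by omega
            rwa [hidx] at e
    exact List.ext_getElem? key

end Aux

theorem stmt7 {A : Type*} [Fintype A] (hA : 2 ≤ Fintype.card A) (b k n : ℕ)
    (hb : 1 ≤ b) (hbk : b < k) (hn : 1 ≤ n) :
    (Fintype.card A : ℝ) ^ n *
        (1 - ((b : ℝ) - 1) * (n : ℝ) * (1 / (Fintype.card A : ℝ) ^ k))
      ≤ ({s : List A | s.length = n ∧ IsCDB s b k}.ncard : ℝ) := by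
  classical
  set σ := Fintype.card A with hσ
  set S := {s : List A | s.length = n ∧ IsCDB s b k} with hS
  have hS_sub : S ⊆ {s : List A | s.length = n} := fun s hs => hs.1
  have hσpos : (0 : ℝ) < (σ : ℝ) := by
    have : (2 : ℝ) ≤ (σ : ℝ) := by exact_mod_cast hA
    linarith
  have hb1 : (0 : ℝ) ≤ (b : ℝ) - 1 := by
    have : (1 : ℝ) ≤ (b : ℝ) := by exact_mod_cast hb
    linarith
  have hpowk : (0 : ℝ) < (σ : ℝ) ^ k := pow_pos hσpos k
  rcases lt_or_ge n k with hnk | hnk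
  · -- no pair of windows fits: every sequence is constrained
    have hSeq : S = {s : List A | s.length = n} := by
      apply Set.Subset.antisymm hS_sub
      intro s hsl
      refine ⟨hsl, ?_⟩
      intro i j hij hd hlen
      have hsl' : s.length = n := hsl
      omega
    rw [hSeq, lenSet_ncard]
    have hc : 0 ≤ ((b : ℝ) - 1) * (n : ℝ) * (1 / (σ : ℝ) ^ k) := by
      apply mul_nonneg (mul_nonneg hb1 (by positivity))
      positivity
    have h1 : (σ : ℝ) ^ n * (1 - ((b : ℝ) - 1) * (n : ℝ) * (1 / (σ : ℝ) ^ k))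
        ≤ (σ : ℝ) ^ n * 1 := by
      apply mul_le_mul_of_nonneg_left (by linarith) (by positivity)
    rw [mul_one] at h1
    exact h1.trans_eq (by push_cast; ring)
  · -- main case: union bound
    set P : Finset (ℕ × ℕ) :=
      (Finset.range n ×ˢ Finset.range n).filter
        (fun p => p.1 < p.2 ∧ p.2 - p.1 ≤ b - 1 ∧ p.2 + k ≤ n) with hP
    set Bad : ℕ × ℕ → Set (List A) :=
      fun p => {s : List A | s.length = n ∧ window s p.1 k = window s p.2 k} with hBad
    have cover : {s : List A | s.length = n} ⊆ S ∪ ⋃ p ∈ P, Bad p := by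
      intro s hsl
      by_cases hc : IsCDB s b k
      · exact Or.inl ⟨hsl, hc⟩
      · right
        unfold IsCDB at hc
        push_neg at hc
        obtain ⟨i, j, hij, hd, hjk, hw⟩ := hc
        have hsl' : s.length = n := hsl
        rw [hsl'] at hjk
        have hpmem : (i, j) ∈ P := by
          simp only [hP, Finset.mem_filter, Finset.mem_product, Finset.mem_range]
          omega
        exact Set.mem_biUnion hpmem ⟨hsl', hw⟩
    have hBadFin : ∀ p : ℕ × ℕ, (Bad p).Finite := fun p =>
      (lenSet_finite n).subset (fun s hs => hs.1)
    have hUnionFin : (S ∪ ⋃ p ∈ P, Bad p).Finite := by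
      apply Set.Finite.union ((lenSet_finite n).subset hS_sub)
      exact Set.Finite.biUnion P.finite_toSet (fun p _ => hBadFin p)
    have hPcard : P.card ≤ (b - 1) * n := by
      have hsub : P ⊆ (Finset.range (b - 1) ×ˢ Finset.range n).image
          (fun q : ℕ × ℕ => (q.2 - q.1 - 1, q.2)) := by
        intro p hp
        simp only [hP, Finset.mem_filter, Finset.mem_product, Finset.mem_range] at hp
        refine Finset.mem_image.mpr ⟨(p.2 - p.1 - 1, p.2), ?_, ?_⟩
        · simp only [Finset.mem_product, Finset.mem_range]
          omega
        · have : p.2 - (p.2 - p.1 - 1) - 1 = p.1 := by omega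
          simp [this]
      calc P.card ≤ _ := Finset.card_le_card hsub
        _ ≤ ((Finset.range (b - 1)) ×ˢ (Finset.range n)).card := Finset.card_image_le
        _ = (b - 1) * n := by simp [Finset.card_product]
    have main : σ ^ n ≤ S.ncard + (b - 1) * n * σ ^ (n - k) := by
      calc σ ^ n = {s : List A | s.length = n}.ncard := (lenSet_ncard n).symm
        _ ≤ (S ∪ ⋃ p ∈ P, Bad p).ncard := Set.ncard_le_ncard cover hUnionFin
        _ ≤ S.ncard + (⋃ p ∈ P, Bad p).ncard := Set.ncard_union_le _ _
        _ ≤ S.ncard + ∑ p ∈ P, (Bad p).ncard := by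
            gcongr
            exact ncard_biUnion_le P Bad
        _ ≤ S.ncard + ∑ _p ∈ P, σ ^ (n - k) := by
            gcongr with p hp
            simp only [hP, Finset.mem_filter, Finset.mem_product, Finset.mem_range] at hp
            exact bad_card n p.1 p.2 k hp.2.1 hp.2.2.2
        _ = S.ncard + P.card * σ ^ (n - k) := by rw [Finset.sum_const, smul_eq_mul]
        _ ≤ S.ncard + (b - 1) * n * σ ^ (n - k) := by gcongr
    have mainR : (σ : ℝ) ^ n ≤ (S.ncard : ℝ) + ((b : ℝ) - 1) * (n : ℝ) * (σ : ℝ) ^ (n - k) := by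
      have := (Nat.cast_le (α := ℝ)).mpr main
      push_cast [Nat.cast_sub hb] at this
      convert this using 2
    have hpow : (σ : ℝ) ^ (n - k) * (σ : ℝ) ^ k = (σ : ℝ) ^ n := by
      rw [← pow_add]
      congr 1
      omega
    have expand : (σ : ℝ) ^ n * (1 - ((b : ℝ) - 1) * (n : ℝ) * (1 / (σ : ℝ) ^ k))
        = (σ : ℝ) ^ n - ((b : ℝ) - 1) * (n : ℝ) * (σ : ℝ) ^ (n - k) := by
      have hσn : (σ : ℝ) ^ n * (1 / (σ : ℝ) ^ k) = (σ : ℝ) ^ (n - k) := by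
        rw [mul_one_div, ← hpow]
        field_simp
      rw [mul_sub, mul_one,
        show (σ : ℝ) ^ n * (((b : ℝ) - 1) * (n : ℝ) * (1 / (σ : ℝ) ^ k))
          = ((b : ℝ) - 1) * (n : ℝ) * ((σ : ℝ) ^ n * (1 / (σ : ℝ) ^ k)) from by ring,
        hσn]
    rw [expand]
    linarith
end

section
/- Let k ≥ 2 and work over the binary alphabet {0,1}. Let F_1 = {0^{k+1}, 1^{k+1}, (0101…)_{k+2}, (1010…)_{k+2}} (the two constant words of length k+1 and the two alternating words of length k+2) and let F_2 = {0^k, 1^{k+1}}. Define D : {0,1}^n → {0,1}^{n−1} by D(x_1,…,x_n) = (y_2,…,y_n) with y_i = x_i + x_{i−1} (mod 2). Then D is a 2-to-1 map; x ∈ A(n;F_1) if and only if D(x) ∈ A(n−1;F_2); and consequently |A(n;F_1)| = 2·|A(n−1;F_2)| for all n ≥ 2. -/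
/-- The derivative map `D(x_1,…,x_n) = (x_1+x_2, …, x_{n-1}+x_n)` over `F_2`. -/
def Dmap (x : List (ZMod 2)) : List (ZMod 2) :=
  List.zipWith (· + ·) x.tail x

/-- The alternating word of length `m` starting with `0`: `0101…`. -/
def alt0 (m : ℕ) : List (ZMod 2) := (List.range m).map (fun i => (i : ZMod 2))

/-- The alternating word of length `m` starting with `1`: `1010…`. -/
def alt1 (m : ℕ) : List (ZMod 2) := (List.range m).map (fun i => ((i + 1 : ℕ) : ZMod 2))

/-- `F_1`: the two constant words of length `k+1` and the two alternating words of
length `k+2`. -/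
def F1 (k : ℕ) : Set (List (ZMod 2)) :=
  {List.replicate (k + 1) (0 : ZMod 2), List.replicate (k + 1) (1 : ZMod 2),
    alt0 (k + 2), alt1 (k + 2)}

/-- `F_2 = {0^k, 1^{k+1}}`. -/
def F2 (k : ℕ) : Set (List (ZMod 2)) :=
  {List.replicate k (0 : ZMod 2), List.replicate (k + 1) (1 : ZMod 2)}

/-! ### Auxiliary development -/

/-- The "integral" of `y` starting with value `b`. -/
def IntD (b : ZMod 2) : List (ZMod 2) → List (ZMod 2)
  | [] => [b]
  | c :: y => b :: IntD (b + c) y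

lemma zmod2_cases (a : ZMod 2) : a = 0 ∨ a = 1 := by revert a; decide

lemma IntD_cons' (b : ZMod 2) (y : List (ZMod 2)) : ∃ t, IntD b y = b :: t := by
  cases y with
  | nil => exact ⟨[], rfl⟩
  | cons c y => exact ⟨_, rfl⟩

lemma IntD_length (b : ZMod 2) (y : List (ZMod 2)) : (IntD b y).length = y.length + 1 := by
  induction y generalizing b with
  | nil => rfl
  | cons c y ih => simp [IntD, ih]

lemma IntD_ne_nil (b : ZMod 2) (y : List (ZMod 2)) : IntD b y ≠ [] := by
  obtain ⟨t, ht⟩ := IntD_cons' b y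
  simp [ht]

lemma IntD_headI (b : ZMod 2) (y : List (ZMod 2)) : (IntD b y).headI = b := by
  obtain ⟨t, ht⟩ := IntD_cons' b y
  rw [ht]; rfl

lemma Dmap_nil : Dmap [] = [] := rfl
lemma Dmap_single (a : ZMod 2) : Dmap [a] = [] := rfl
lemma Dmap_cons_cons (a b : ZMod 2) (t : List (ZMod 2)) :
    Dmap (a :: b :: t) = (b + a) :: Dmap (b :: t) := rfl

lemma Dmap_length (x : List (ZMod 2)) : (Dmap x).length = x.length - 1 := by
  simp [Dmap]

lemma Dmap_IntD (b : ZMod 2) (y : List (ZMod 2)) : Dmap (IntD b y) = y := by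
  induction y generalizing b with
  | nil => rfl
  | cons c y ih =>
    obtain ⟨t, ht⟩ := IntD_cons' (b + c) y
    show Dmap (b :: IntD (b + c) y) = c :: y
    rw [ht, Dmap_cons_cons, ← ht, ih]
    have h2 : ∀ a d : ZMod 2, (a + d) + a = d := by decide
    rw [h2]

lemma IntD_Dmap : ∀ (x : List (ZMod 2)), x ≠ [] → IntD x.headI (Dmap x) = x := by
  intro x
  induction x with
  | nil => intro h; exact absurd rfl h
  | cons a t ih =>
    intro _
    cases t with
    | nil => rfl
    | cons b t' =>
      rw [Dmap_cons_cons]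
      show a :: IntD (a + (b + a)) (Dmap (b :: t')) = a :: b :: t'
      have h2 : ∀ a d : ZMod 2, a + (d + a) = d := by decide
      rw [h2]
      have := ih (by simp)
      simp only [List.headI] at this
      rw [this]

lemma IntD_injective (b : ZMod 2) : Function.Injective (IntD b) := by
  intro y y' h
  rw [← Dmap_IntD b y, h, Dmap_IntD]

/-! ### Infix transfer lemmas -/

lemma Dmap_suffix_cons (a : ZMod 2) (t : List (ZMod 2)) : Dmap t <:+ Dmap (a :: t) := by
  cases t with
  | nil => simp [Dmap_nil, Dmap_single]
  | cons b t' =>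
    rw [Dmap_cons_cons]
    exact List.suffix_cons _ _

lemma Dmap_suffix (p w : List (ZMod 2)) : Dmap w <:+ Dmap (p ++ w) := by
  induction p with
  | nil => simp
  | cons a p ih => exact ih.trans (Dmap_suffix_cons a _)

lemma Dmap_prefix (u s : List (ZMod 2)) : Dmap u <+: Dmap (u ++ s) := by
  induction u with
  | nil => simp [Dmap_nil]
  | cons a t ih =>
    cases t with
    | nil => simp [Dmap_single]
    | cons b t' =>
      rw [show (a :: b :: t') ++ s = a :: b :: (t' ++ s) from rfl,
        Dmap_cons_cons, Dmap_cons_cons]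
      exact (List.cons_prefix_cons).2 ⟨rfl, ih⟩

lemma Dmap_infix {u x : List (ZMod 2)} (h : u <:+: x) : Dmap u <:+: Dmap x := by
  obtain ⟨p, s, rfl⟩ := h
  refine (Dmap_prefix u s).isInfix.trans ?_
  rw [List.append_assoc]
  exact (Dmap_suffix p (u ++ s)).isInfix

lemma Dmap_drop : ∀ (i : ℕ) (x : List (ZMod 2)), Dmap (x.drop i) = (Dmap x).drop i := by
  intro i
  induction i with
  | zero => intro x; simp
  | succ i ih =>
    intro x
    cases x with
    | nil => simp [Dmap_nil]
    | cons a t =>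
      rw [List.drop_succ_cons, ih]
      cases t with
      | nil => simp [Dmap_nil, Dmap_single]
      | cons b t' => rw [Dmap_cons_cons, List.drop_succ_cons]

lemma Dmap_take : ∀ (x : List (ZMod 2)) (m : ℕ), Dmap (x.take (m + 1)) = (Dmap x).take m := by
  intro x
  induction x with
  | nil => intro m; simp [Dmap_nil]
  | cons a t ih =>
    intro m
    cases m with
    | zero => cases t <;> simp [Dmap_single, Dmap_nil]
    | succ m' =>
      cases t with
      | nil => simp [Dmap_single, Dmap_nil]
      | cons b t' =>
        rw [show (a :: b :: t').take (m' + 1 + 1) = a :: b :: t'.take m' from rfl,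
          Dmap_cons_cons, Dmap_cons_cons,
          show b :: t'.take m' = (b :: t').take (m' + 1) from rfl, ih,
          List.take_succ_cons]

lemma exists_preimage_infix {v x : List (ZMod 2)} (hx : x ≠ []) (h : v <:+: Dmap x) :
    ∃ u, u <:+: x ∧ u.length = v.length + 1 ∧ Dmap u = v := by
  obtain ⟨p, s, hps⟩ := h
  have hlen : p.length + v.length + 1 ≤ x.length := by
    have h1 : (Dmap x).length = x.length - 1 := Dmap_length x
    have h2 : (p ++ v ++ s).length = (Dmap x).length := by rw [hps]
    simp [List.length_append] at h2
    have hx1 : 1 ≤ x.length := List.length_pos_iff.2 hx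
    omega
  refine ⟨(x.drop p.length).take (v.length + 1), ?_, ?_, ?_⟩
  · exact (List.take_prefix _ _).isInfix.trans (List.drop_suffix _ _).isInfix
  · rw [List.length_take, List.length_drop]
    omega
  · rw [Dmap_take, Dmap_drop, ← hps, List.append_assoc, List.drop_left, List.take_left]

/-! ### Computations with special words -/

lemma IntD_rep0 (b : ZMod 2) : ∀ m, IntD b (List.replicate m 0) = List.replicate (m + 1) b := by
  intro m
  induction m with
  | zero => rfl
  | succ m ih =>
    rw [List.replicate_succ, show IntD b ((0:ZMod 2) :: List.replicate m 0)
      = b :: IntD (b + 0) (List.replicate m 0) from rfl, add_zero, ih]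
    rfl

lemma alt0_eq (m : ℕ) : alt0 m = (List.range m).map (fun i : ℕ => (i : ZMod 2)) := by
  have h : ∀ l : List ℕ, (l.flatMap fun a : ℕ => [(a : ZMod 2)])
      = l.map (fun i : ℕ => (i : ZMod 2)) := by
    intro l
    induction l with
    | nil => rfl
    | cons a l ih => simp [List.flatMap_cons, ih]
  simp [alt0, h]

lemma alt1_eq (m : ℕ) : alt1 m = (List.range m).map (fun i : ℕ => ((i + 1 : ℕ) : ZMod 2)) := by
  simp [alt1]

lemma alt0_succ (m : ℕ) : alt0 (m + 1) = 0 :: alt1 m := by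
  rw [alt0_eq, alt1_eq, List.range_succ_eq_map, List.map_cons, List.map_map]
  congr 1

lemma alt1_succ (m : ℕ) : alt1 (m + 1) = 1 :: alt0 m := by
  rw [alt0_eq, alt1_eq, List.range_succ_eq_map, List.map_cons, List.map_map]
  congr 1
  apply List.map_congr_left
  intro a _
  simp only [Function.comp_apply]
  push_cast
  have h2 : ∀ z : ZMod 2, z + 1 + 1 = z := by decide
  exact h2 _

lemma IntD_rep1 : ∀ m, IntD 0 (List.replicate m 1) = alt0 (m + 1)
    ∧ IntD 1 (List.replicate m 1) = alt1 (m + 1) := by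
  intro m
  induction m with
  | zero =>
    constructor
    · rw [alt0_succ]; rfl
    · rw [alt1_succ]; rfl
  | succ m ih =>
    constructor
    · rw [List.replicate_succ, show IntD 0 ((1:ZMod 2) :: List.replicate m 1)
        = 0 :: IntD (0 + 1) (List.replicate m 1) from rfl, zero_add, ih.2, alt0_succ]
    · rw [List.replicate_succ, show IntD 1 ((1:ZMod 2) :: List.replicate m 1)
        = 1 :: IntD (1 + 1) (List.replicate m 1) from rfl,
        show (1 + 1 : ZMod 2) = 0 by decide, ih.1, alt1_succ]

lemma Dmap_replicate (c : ZMod 2) (m : ℕ) :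
    Dmap (List.replicate (m + 1) c) = List.replicate m 0 := by
  rw [← IntD_rep0 c m, Dmap_IntD]

lemma Dmap_alt0 (m : ℕ) : Dmap (alt0 (m + 1)) = List.replicate m 1 := by
  rw [← (IntD_rep1 m).1, Dmap_IntD]

lemma Dmap_alt1 (m : ℕ) : Dmap (alt1 (m + 1)) = List.replicate m 1 := by
  rw [← (IntD_rep1 m).2, Dmap_IntD]

/-! ### The avoidance equivalence -/

lemma mem_F1 {k : ℕ} {t : List (ZMod 2)} :
    t ∈ F1 k ↔ t = List.replicate (k + 1) (0 : ZMod 2) ∨ t = List.replicate (k + 1) (1 : ZMod 2)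
      ∨ t = alt0 (k + 2) ∨ t = alt1 (k + 2) := by
  simp [F1, Set.mem_insert_iff, Set.mem_singleton_iff]

lemma mem_F2 {k : ℕ} {t : List (ZMod 2)} :
    t ∈ F2 k ↔ t = List.replicate k (0 : ZMod 2) ∨ t = List.replicate (k + 1) (1 : ZMod 2) := by
  simp [F2, Set.mem_insert_iff, Set.mem_singleton_iff]

lemma avoids_iff (k : ℕ) (x : List (ZMod 2)) (hx : x ≠ []) :
    Avoids x (F1 k) ↔ Avoids (Dmap x) (F2 k) := by
  constructor
  · intro h t ht hinf
    rcases mem_F2.1 ht with rfl | rfl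
    · obtain ⟨u, hu, hlen, hDu⟩ := exists_preimage_infix hx hinf
      have hune : u ≠ [] := by
        intro h'
        rw [h'] at hlen
        simp at hlen
      have hu_eq : u = List.replicate (k + 1) u.headI := by
        conv_lhs => rw [← IntD_Dmap u hune]
        rw [hDu, IntD_rep0]
      rcases zmod2_cases u.headI with h0 | h1
      · exact h _ (mem_F1.2 (Or.inl (by rw [← h0, ← hu_eq]))) hu
      · exact h _ (mem_F1.2 (Or.inr (Or.inl (by rw [← h1, ← hu_eq])))) hu
    · obtain ⟨u, hu, hlen, hDu⟩ := exists_preimage_infix hx hinf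
      have hune : u ≠ [] := by
        intro h'
        rw [h'] at hlen
        simp at hlen
      have hu_eq : u = IntD u.headI (List.replicate (k + 1) 1) := by
        conv_lhs => rw [← IntD_Dmap u hune]
        rw [hDu]
      rcases zmod2_cases u.headI with h0 | h1
      · rw [h0, (IntD_rep1 (k + 1)).1] at hu_eq
        exact h _ (mem_F1.2 (Or.inr (Or.inr (Or.inl rfl)))) (hu_eq ▸ hu)
      · rw [h1, (IntD_rep1 (k + 1)).2] at hu_eq
        exact h _ (mem_F1.2 (Or.inr (Or.inr (Or.inr rfl)))) (hu_eq ▸ hu)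
  · intro h t ht hinf
    rcases mem_F1.1 ht with rfl | rfl | rfl | rfl
    · have := Dmap_infix hinf
      rw [Dmap_replicate] at this
      exact h _ (mem_F2.2 (Or.inl rfl)) this
    · have := Dmap_infix hinf
      rw [Dmap_replicate] at this
      exact h _ (mem_F2.2 (Or.inl rfl)) this
    · have := Dmap_infix hinf
      rw [show k + 2 = (k + 1) + 1 from rfl, Dmap_alt0] at this
      exact h _ (mem_F2.2 (Or.inr rfl)) this
    · have := Dmap_infix hinf
      rw [show k + 2 = (k + 1) + 1 from rfl, Dmap_alt1] at this
      exact h _ (mem_F2.2 (Or.inr rfl)) this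

theorem stmt9 (k : ℕ) (hk : 2 ≤ k) (n : ℕ) (hn : 2 ≤ n) :
    (∀ y : List (ZMod 2), y.length = n - 1 →
        {x : List (ZMod 2) | x.length = n ∧ Dmap x = y}.ncard = 2)
    ∧ (∀ x : List (ZMod 2), x.length = n →
        (Avoids x (F1 k) ↔ Avoids (Dmap x) (F2 k)))
    ∧ {x : List (ZMod 2) | x.length = n ∧ Avoids x (F1 k)}.ncard
        = 2 * {y : List (ZMod 2) | y.length = n - 1 ∧ Avoids y (F2 k)}.ncard := by
  refine ⟨?_, ?_, ?_⟩
  · -- fibers have cardinality 2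
    intro y hy
    have hset : {x : List (ZMod 2) | x.length = n ∧ Dmap x = y} = {IntD 0 y, IntD 1 y} := by
      ext x
      simp only [Set.mem_setOf_eq, Set.mem_insert_iff, Set.mem_singleton_iff]
      constructor
      · rintro ⟨hl, hD⟩
        have hne : x ≠ [] := by
          intro h'
          rw [h'] at hl
          simp at hl
          omega
        have hx_eq : x = IntD x.headI y := by
          conv_lhs => rw [← IntD_Dmap x hne]
          rw [hD]
        rcases zmod2_cases x.headI with h0 | h1
        · left; rw [hx_eq, h0]
        · right; rw [hx_eq, h1]
      · rintro (rfl | rfl) <;>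
          exact ⟨by rw [IntD_length, hy]; omega, Dmap_IntD _ _⟩
    rw [hset]
    apply Set.ncard_pair
    intro h
    have := congrArg List.headI h
    rw [IntD_headI, IntD_headI] at this
    exact absurd this (by decide)
  · -- the avoidance equivalence
    intro x hx
    apply avoids_iff
    intro h'
    rw [h'] at hx
    simp at hx
    omega
  · -- the counting identity
    have hfin2 : {y : List (ZMod 2) | y.length = n - 1 ∧ Avoids y (F2 k)}.Finite :=
      (List.finite_length_eq (ZMod 2) (n - 1)).subset (fun y hy => hy.1)
    have hset : {x : List (ZMod 2) | x.length = n ∧ Avoids x (F1 k)}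
        = IntD 0 '' {y | y.length = n - 1 ∧ Avoids y (F2 k)}
          ∪ IntD 1 '' {y | y.length = n - 1 ∧ Avoids y (F2 k)} := by
      ext x
      simp only [Set.mem_setOf_eq, Set.mem_union, Set.mem_image]
      constructor
      · rintro ⟨hl, hav⟩
        have hne : x ≠ [] := by
          intro h'
          rw [h'] at hl
          simp at hl
          omega
        have hDmem : (Dmap x).length = n - 1 ∧ Avoids (Dmap x) (F2 k) := by
          refine ⟨by rw [Dmap_length, hl], (avoids_iff k x hne).1 hav⟩
        have hx_eq : IntD x.headI (Dmap x) = x := IntD_Dmap x hne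
        rcases zmod2_cases x.headI with h0 | h1
        · left; exact ⟨Dmap x, hDmem, by rw [← h0, hx_eq]⟩
        · right; exact ⟨Dmap x, hDmem, by rw [← h1, hx_eq]⟩
      · rintro (⟨y, ⟨hyl, hyav⟩, rfl⟩ | ⟨y, ⟨hyl, hyav⟩, rfl⟩) <;>
        · refine ⟨by rw [IntD_length, hyl]; omega, ?_⟩
          rw [avoids_iff k _ (IntD_ne_nil _ _), Dmap_IntD]
          exact hyav
    have hdisj : Disjoint (IntD 0 '' {y : List (ZMod 2) | y.length = n - 1 ∧ Avoids y (F2 k)})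
        (IntD 1 '' {y : List (ZMod 2) | y.length = n - 1 ∧ Avoids y (F2 k)}) := by
      rw [Set.disjoint_left]
      rintro x ⟨y, _, rfl⟩ ⟨y', _, hy'⟩
      have := congrArg List.headI hy'
      rw [IntD_headI, IntD_headI] at this
      exact absurd this (by decide)
    rw [hset, Set.ncard_union_eq hdisj (hfin2.image _) (hfin2.image _),
      Set.ncard_image_of_injective _ (IntD_injective 0),
      Set.ncard_image_of_injective _ (IntD_injective 1)]
    ring
end

section
/- Let k ≥ 2 and let F_2 = {0^k, 1^{k+1}} over the binary alphabet. Let A_0(n;F_2) (respectively A_1(n;F_2)) be the set of binary words of length n that avoid F_2 and start with 0 (respectively with 1). Then for all n ≥ k, |A_0(n;F_2)| = Σ_{i=1}^{k−1} |A_1(n−i;F_2)|. -/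
lemma zmod2_eq_one {c : ZMod 2} (h : c ≠ 0) : c = 1 := by revert h; revert c; decide

lemma avoids_of_infix {s t : List (ZMod 2)} {F : Set (List (ZMod 2))}
    (h : Avoids s F) (ht : t <:+: s) : Avoids t F :=
  fun p hp hpt => h p hp (hpt.trans ht)

lemma dropWhile_head_neg {α} (p : α → Bool) :
    ∀ (l : List α) {c : α} {d : List α}, l.dropWhile p = c :: d → p c = false := by
  intro l
  induction l with
  | nil => intro c d h; simp at h
  | cons a l ih =>
    intro c d h
    rw [List.dropWhile_cons] at h
    by_cases hpa : p a = true
    · rw [if_pos hpa] at h; exact ih h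
    · rw [if_neg hpa] at h
      cases h
      simpa using hpa

lemma repl_inj : ∀ (i : ℕ) (j : ℕ) (a b : List (ZMod 2)),
    List.replicate i (0:ZMod 2) ++ 1 :: a = List.replicate j (0:ZMod 2) ++ 1 :: b →
    i = j ∧ a = b := by
  intro i
  induction i with
  | zero =>
    intro j a b h
    cases j with
    | zero => simpa using h
    | succ j =>
      rw [List.replicate_succ] at h
      simp only [List.replicate_zero, List.nil_append, List.cons_append, List.cons.injEq] at h
      exact absurd h.1 (by decide)
  | succ i ih =>
    intro j a b h
    cases j with
    | zero =>
      rw [List.replicate_succ] at h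
      simp only [List.replicate_zero, List.nil_append, List.cons_append, List.cons.injEq] at h
      exact absurd h.1 (by decide)
    | succ j =>
      rw [List.replicate_succ, List.replicate_succ] at h
      simp only [List.cons_append, List.cons.injEq, true_and] at h
      obtain ⟨h1, h2⟩ := ih j a b h
      exact ⟨by omega, h2⟩

lemma avoids_build {k i : ℕ} {t : List (ZMod 2)} (hk : 2 ≤ k) (hi1 : 1 ≤ i) (hik : i < k)
    (ht : Avoids (1 :: t) (F2 k)) :
    Avoids (List.replicate i (0:ZMod 2) ++ 1 :: t) (F2 k) := by
  intro p hp hinf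
  obtain ⟨u, v, huv⟩ := hinf
  have hplen : k ≤ p.length := by
    rcases hp with hp | hp <;> subst hp <;> simp <;> omega
  rcases le_or_gt i u.length with hle | hlt
  · -- the occurrence lies inside `1 :: t`
    apply ht p hp
    refine ⟨u.drop i, v, ?_⟩
    have h2 : List.drop i ((u ++ p) ++ v) =
        List.drop i (List.replicate i (0:ZMod 2) ++ 1 :: t) := by rw [huv]
    rw [List.append_assoc, List.drop_append_of_le_length hle] at h2
    have h3 : List.drop i (List.replicate i (0:ZMod 2) ++ 1 :: t) = 1 :: t := by
      have := List.drop_left (l₁ := List.replicate i (0:ZMod 2)) (l₂ := 1 :: t)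
      simpa using this
    rw [h3] at h2
    rw [List.append_assoc]
    exact h2
  · -- u.length < i : derive a contradiction by looking at a single position
    rcases hp with hp | hp
    · -- p = 0^k ; look at position i
      subst hp
      have hik2 : i < u.length + k := by omega
      have hlen1 : i < ((u ++ List.replicate k (0:ZMod 2)) ++ v).length := by
        simp only [List.length_append, List.length_replicate]; omega
      have e := List.getElem_of_eq huv hlen1
      rw [List.getElem_append_left
          (show i < (u ++ List.replicate k (0:ZMod 2)).length by
            simp only [List.length_append, List.length_replicate]; omega),
        List.getElem_append_right (by omega), List.getElem_replicate,
        List.getElem_append_right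
          (show (List.replicate i (0:ZMod 2)).length ≤ i by simp)] at e
      simp at e
    · -- p = 1^{k+1} ; look at position u.length
      subst hp
      have hlen1 : u.length < ((u ++ List.replicate (k+1) (1:ZMod 2)) ++ v).length := by
        simp only [List.length_append, List.length_replicate]; omega
      have e := List.getElem_of_eq huv hlen1
      rw [List.getElem_append_left
          (show u.length < (u ++ List.replicate (k+1) (1:ZMod 2)).length by
            simp only [List.length_append, List.length_replicate]; omega),
        List.getElem_append_right (le_refl _), List.getElem_replicate,
        List.getElem_append_left
          (show u.length < (List.replicate i (0:ZMod 2)).length by simpa using hlt),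
        List.getElem_replicate] at e
      exact absurd e (by decide)

lemma decompose {k n : ℕ} {s : List (ZMod 2)} (hk : 2 ≤ k) (hn : k ≤ n)
    (hlen : s.length = n) (hav : Avoids s (F2 k)) (hhead : s.head? = some 0) :
    ∃ i, 1 ≤ i ∧ i ≤ k - 1 ∧ ∃ t, s = List.replicate i (0:ZMod 2) ++ 1 :: t ∧
      (1 :: t).length = n - i ∧ Avoids (1 :: t) (F2 k) := by
  classical
  obtain ⟨s₀, rfl⟩ : ∃ s₀, s = (0:ZMod 2) :: s₀ := by
    cases s with
    | nil => simp at hhead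
    | cons a s₀ =>
      refine ⟨s₀, ?_⟩
      have : a = 0 := by simpa using hhead
      rw [this]
  set p : ZMod 2 → Bool := fun a => a == 0 with hp
  set s : List (ZMod 2) := (0:ZMod 2) :: s₀ with hsdef
  set w : List (ZMod 2) := s.takeWhile p with hwdef
  set i : ℕ := w.length with hidef
  have hw : w = List.replicate i (0:ZMod 2) := by
    rw [List.eq_replicate_iff]
    refine ⟨rfl, fun b hb => ?_⟩
    have := List.mem_takeWhile_imp hb
    simpa [hp] using this
  -- i < k
  have hik : i < k := by
    by_contra hc
    push_neg at hc
    have hpre : List.replicate k (0:ZMod 2) <+: List.replicate i (0:ZMod 2) := by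
      refine ⟨List.replicate (i - k) (0:ZMod 2), ?_⟩
      rw [← List.replicate_add]
      congr 1
      omega
    have hinf : List.replicate k (0:ZMod 2) <:+: s :=
      (hpre.trans (hw ▸ List.takeWhile_prefix p)).isInfix
    exact hav _ (Or.inl rfl) hinf
  -- 1 ≤ i
  have hi1 : 1 ≤ i := by
    have hw2 : w = (0:ZMod 2) :: List.takeWhile p s₀ := by
      rw [hwdef, hsdef, List.takeWhile_cons_of_pos (by simp [hp])]
    simp [hidef, hw2]
  -- split
  have hsplit : w ++ s.dropWhile p = s := List.takeWhile_append_dropWhile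
  set d : List (ZMod 2) := s.dropWhile p with hddef
  cases hd : d with
  | nil =>
    exfalso
    rw [hd] at hsplit
    rw [List.append_nil] at hsplit
    have : s.length = i := by rw [← hsplit, hw]; simp
    omega
  | cons c d' =>
    have hc : p c = false := dropWhile_head_neg p s (by rw [← hddef, hd])
    have hc1 : c = 1 := zmod2_eq_one (by simpa [hp] using hc)
    subst hc1
    have hs : s = List.replicate i (0:ZMod 2) ++ 1 :: d' := by
      rw [← hsplit, hw, hd]
    have hlend : (1 :: d').length = n - i := by
      have : s.length = i + (1 :: d').length := by rw [hs]; simp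
      omega
    have havd : Avoids (1 :: d') (F2 k) := by
      apply avoids_of_infix hav
      have : (1 :: d') <:+ s := by rw [← hd, hddef]; exact List.dropWhile_suffix p
      exact this.isInfix
    exact ⟨i, hi1, by omega, d', hs, hlend, havd⟩

theorem stmt10 (k n : ℕ) (hk : 2 ≤ k) (hn : k ≤ n) :
    {s : List (ZMod 2) | s.length = n ∧ Avoids s (F2 k) ∧ s.head? = some 0}.ncard
      = ∑ i ∈ Finset.Icc 1 (k - 1),
          {s : List (ZMod 2) | s.length = n - i ∧ Avoids s (F2 k) ∧ s.head? = some 1}.ncard := by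
  classical
  set A0 : Set (List (ZMod 2)) :=
    {s : List (ZMod 2) | s.length = n ∧ Avoids s (F2 k) ∧ s.head? = some 0} with hA0
  set T : ℕ → Set (List (ZMod 2)) :=
    fun i => {s : List (ZMod 2) | s.length = n - i ∧ Avoids s (F2 k) ∧ s.head? = some 1} with hT
  have hA0fin : A0.Finite :=
    (List.finite_length_eq (ZMod 2) n).subset (fun s hs => hs.1)
  have hTfin : ∀ i, (T i).Finite :=
    fun i => (List.finite_length_eq (ZMod 2) (n - i)).subset (fun s hs => hs.1)
  set G : ℕ → Finset (List (ZMod 2)) :=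
    fun i => ((hTfin i).toFinset).image (fun t => List.replicate i (0:ZMod 2) ++ t) with hG
  -- head of members of T i
  have hTone : ∀ i t, t ∈ T i → ∃ t', t = 1 :: t' := by
    intro i t ht
    cases t with
    | nil => simp [hT] at ht
    | cons a t' =>
      refine ⟨t', ?_⟩
      have := ht.2.2
      simp at this
      rw [this]
  -- main set equality
  have hmain : hA0fin.toFinset = (Finset.Icc 1 (k - 1)).biUnion G := by
    ext s
    simp only [Set.Finite.mem_toFinset, Finset.mem_biUnion, hG, Finset.mem_image,
      Finset.mem_Icc, Set.Finite.mem_toFinset]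
    constructor
    · rintro hs
      obtain ⟨hslen, hsav, hshead⟩ := hs
      obtain ⟨i, hi1, hik, t, hst, htlen, htav⟩ := decompose hk hn hslen hsav hshead
      refine ⟨i, ⟨hi1, hik⟩, 1 :: t, ?_, hst.symm⟩
      exact ⟨htlen, htav, rfl⟩
    · rintro ⟨i, ⟨hi1, hik⟩, t, htmem, rfl⟩
      obtain ⟨t', rfl⟩ := hTone i t htmem
      obtain ⟨htlen, htav, _⟩ := htmem
      have hik' : i < k := by omega
      refine ⟨?_, avoids_build hk hi1 hik' htav, ?_⟩
      · simp only [List.length_append, List.length_replicate] at *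
        omega
      · obtain ⟨i', rfl⟩ : ∃ i', i = i' + 1 := ⟨i - 1, by omega⟩
        rw [List.replicate_succ]
        simp
  -- disjointness
  have hdisj : ∀ x ∈ Finset.Icc 1 (k-1), ∀ y ∈ Finset.Icc 1 (k-1), x ≠ y →
      Disjoint (G x) (G y) := by
    intro x hx y hy hxy
    rw [Finset.disjoint_left]
    rintro s hsx hsy
    simp only [hG, Finset.mem_image, Set.Finite.mem_toFinset] at hsx hsy
    obtain ⟨a, ha, has⟩ := hsx
    obtain ⟨b, hb, hbs⟩ := hsy
    obtain ⟨a', rfl⟩ := hTone x a ha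
    obtain ⟨b', rfl⟩ := hTone y b hb
    exact hxy (repl_inj x y a' b' (has.trans hbs.symm)).1
  -- compute
  rw [Set.ncard_eq_toFinset_card _ hA0fin, hmain, Finset.card_biUnion hdisj]
  apply Finset.sum_congr rfl
  intro i _
  rw [hG]
  rw [Finset.card_image_of_injective _ (List.append_right_injective _)]
  rw [← Set.ncard_eq_toFinset_card _ (hTfin i)]
end

section
/- Let Σ_1, Σ_2 be finite alphabets, let b ≥ 2, t_1 ≥ 1, and t = t_1·(b−1). Let s ∈ Σ_1^ℓ be a (b,1)-constrained de Bruijn sequence and let C ⊆ Σ_2^ℓ be a code in which any two distinct codewords have Hamming distance at least t+1 (a t-erasure-correcting code). For c ∈ C define f(c) ∈ (Σ_2 × Σ_1)^ℓ by f(c)_i = (c_i, s_i). Suppose c, c' ∈ C and Δ, Δ' ⊆ {1,…,ℓ} are each a union of at most t_1 sets of consecutive integers, each of size at most b−1 (so |Δ|, |Δ'| ≤ t with at most b−1 consecutive deleted positions). If the word obtained from f(c) by deleting the coordinates in Δ equals the word obtained from f(c') by deleting the coordinates in Δ', then c = c' (and Δ = Δ'). In other words, the code { f(c) : c ∈ C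 } corrects any t_1 bursts of deletions, each of length at most b−1. -/
/-- The word obtained from `s` by deleting the symbols at the (0-based) positions
in `Δ`, keeping the remaining symbols in order. -/
def erasePos {A : Type*} (s : List A) (Δ : Finset ℕ) : List A :=
  ((List.range s.length).filter (fun i => i ∉ Δ)).filterMap (fun i => s[i]?)

/-- Hamming distance between two words of the same length. -/
def hdist {B : Type*} [DecidableEq B] (x y : List B) : ℕ :=
  (List.zipWith (fun a b => if a = b then 0 else 1) x y).sum

/-- `Δ` is a union of at most `t₁` bursts (sets of consecutive integers), each of
size at most `w`, inside positions `{0,…,ℓ-1}`, with at most `w` consecutive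
deleted positions overall (bursts are separated). -/
def IsBurstSet (Δ : Finset ℕ) (t₁ w ℓ : ℕ) : Prop :=
  (∃ l : List (ℕ × ℕ), l.length ≤ t₁ ∧ (∀ p ∈ l, p.2 ≤ w) ∧
      Δ = l.foldr (fun p acc => Finset.Ico p.1 (p.1 + p.2) ∪ acc) ∅)
    ∧ Δ ⊆ Finset.range ℓ
    ∧ ¬ ∃ j : ℕ, ∀ u : ℕ, u ≤ w → j + u ∈ Δ

lemma fm_getElem? {A : Type*} (s : List A) (l : List ℕ) (h : ∀ i ∈ l, i < s.length) (m : ℕ) :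
    (l.filterMap (fun i => s[i]?))[m]? = l[m]?.bind (fun i => s[i]?) := by
  induction l generalizing m with
  | nil => simp
  | cons a l ih =>
    have ha : a < s.length := h a List.mem_cons_self
    have hsa : s[a]? = some (s[a]'ha) := List.getElem?_eq_getElem ha
    rw [List.filterMap_cons, hsa]
    cases m with
    | zero => simp [hsa]
    | succ m => simpa using ih (fun i hi => h i (List.mem_cons_of_mem a hi)) m

lemma erasePos_zip_snd {A B : Type*} (c : List B) (s : List A) (h : c.length = s.length)
    (Δ : Finset ℕ) : (erasePos (c.zip s) Δ).map Prod.snd = erasePos s Δ := by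
  unfold erasePos
  have hlen : (c.zip s).length = s.length := by simp [h]
  rw [hlen, List.map_filterMap]
  refine List.filterMap_congr fun i hi => ?_
  have hi' : i < s.length := List.mem_range.mp (List.mem_of_mem_filter hi)
  have hic : i < (c.zip s).length := by rw [hlen]; exact hi'
  rw [List.getElem?_eq_getElem hic, List.getElem?_eq_getElem hi']
  simp [List.getElem_zip]

lemma erasePos_zip_fst {A B : Type*} (c : List B) (s : List A) (h : c.length = s.length)
    (Δ : Finset ℕ) : (erasePos (c.zip s) Δ).map Prod.fst = erasePos c Δ := by
  unfold erasePos
  have hlen : (c.zip s).length = c.length := by simp [h]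
  rw [hlen, List.map_filterMap]
  refine List.filterMap_congr fun i hi => ?_
  have hi' : i < c.length := List.mem_range.mp (List.mem_of_mem_filter hi)
  have hic : i < (c.zip s).length := by rw [hlen]; exact hi'
  rw [List.getElem?_eq_getElem hic, List.getElem?_eq_getElem hi']
  simp [List.getElem_zip]

lemma key_lemma {A : Type*} (s : List A) (b ℓ : ℕ) (hslen : s.length = ℓ) (hs : IsCDB s b 1)
    (Δ Δ' : Finset ℕ) (hsub : Δ ⊆ Finset.range ℓ)
    (hno : ¬ ∃ j : ℕ, ∀ u : ℕ, u ≤ b - 1 → j + u ∈ Δ)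
    (i : ℕ) (hiΔ : i ∈ Δ) (hiΔ' : i ∉ Δ')
    (hagree : ∀ x, x < i → (x ∈ Δ ↔ x ∈ Δ'))
    (heq : erasePos s Δ = erasePos s Δ') : False := by
  have hiℓ : i < ℓ := Finset.mem_range.mp (hsub hiΔ)
  have hsplit : List.range ℓ = List.range' 0 i ++ List.range' i (ℓ - i) := by
    have h1 := List.range'_append (s := 0) (m := i) (n := ℓ - i) (step := 1)
    simp only [Nat.zero_add, Nat.one_mul] at h1
    have h2 : i + (ℓ - i) = ℓ := by omega
    rw [h2] at h1
    rw [List.range_eq_range']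
    exact h1.symm
  have hmemrange' : ∀ x ∈ List.range' i (ℓ - i), i ≤ x ∧ x < ℓ := by
    intro x hx
    rw [List.mem_range'] at hx
    obtain ⟨k, hk, rfl⟩ := hx
    omega
  -- prefix lists agree
  have hLL' : (List.range' 0 i).filter (fun x => x ∉ Δ)
      = (List.range' 0 i).filter (fun x => x ∉ Δ') := by
    refine List.filter_congr fun x hx => ?_
    rw [List.mem_range'] at hx
    obtain ⟨k, hk, rfl⟩ := hx
    simp only [decide_eq_decide]
    exact not_congr (hagree _ (by omega))
  set L : List ℕ := (List.range' 0 i).filter (fun x => x ∉ Δ) with hL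
  set m : ℕ := L.length with hm
  -- decompose the kept lists
  have hKΔ : (List.range ℓ).filter (fun x => x ∉ Δ)
      = L ++ (List.range' i (ℓ - i)).filter (fun x => x ∉ Δ) := by
    rw [hsplit, List.filter_append]
  have hKΔ' : (List.range ℓ).filter (fun x => x ∉ Δ')
      = L ++ (List.range' i (ℓ - i)).filter (fun x => x ∉ Δ') := by
    rw [hsplit, List.filter_append, ← hLL']
  -- the (ℓ - i) window starts with i on the Δ' side
  have hT' : (List.range' i (ℓ - i)).filter (fun x => x ∉ Δ')
      = i :: (List.range' (i + 1) (ℓ - i - 1)).filter (fun x => x ∉ Δ') := by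
    have : ℓ - i = (ℓ - i - 1) + 1 := by omega
    rw [this, List.range'_succ, List.filter_cons]
    simp [hiΔ']
  -- getElem? of the erased words at position m
  have hmem : ∀ (E : Finset ℕ), ∀ x ∈ (List.range ℓ).filter (fun x => x ∉ E), x < s.length := by
    intro E x hx
    rw [hslen]
    exact List.mem_range.mp (List.mem_of_mem_filter hx)
  have herΔ : erasePos s Δ
      = ((List.range ℓ).filter (fun x => x ∉ Δ)).filterMap (fun x => s[x]?) := by
    unfold erasePos; rw [hslen]
  have herΔ' : erasePos s Δ'
      = ((List.range ℓ).filter (fun x => x ∉ Δ')).filterMap (fun x => s[x]?) := by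
    unfold erasePos; rw [hslen]
  have eΔ : (erasePos s Δ)[m]? =
      (((List.range' i (ℓ - i)).filter (fun x => x ∉ Δ))[0]?).bind (fun x => s[x]?) := by
    rw [herΔ, fm_getElem? s _ (hmem Δ) m, hKΔ, List.getElem?_append_right (le_refl m)]
    simp [hm]
  have eΔ' : (erasePos s Δ')[m]? = some (s[i]'(by omega)) := by
    rw [herΔ', fm_getElem? s _ (hmem Δ') m, hKΔ', List.getElem?_append_right (le_refl m), hT']
    simp [hm, List.getElem?_eq_getElem (show i < s.length by omega)]
  rw [heq, eΔ'] at eΔ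
  -- extract the head j of the Δ-side tail
  rcases hTcase : (List.range' i (ℓ - i)).filter (fun x => x ∉ Δ) with _ | ⟨j, tl⟩
  · rw [hTcase] at eΔ; simp at eΔ
  · rw [hTcase] at eΔ
    simp only [List.getElem?_cons_zero, Option.bind_some] at eΔ
    have hjmem : j ∈ (List.range' i (ℓ - i)).filter (fun x => x ∉ Δ) := by
      rw [hTcase]; exact List.mem_cons_self
    have hjΔ : j ∉ Δ := by
      have := List.of_mem_filter hjmem
      simpa using this
    have hjr : i ≤ j ∧ j < ℓ := hmemrange' j (List.mem_of_mem_filter hjmem)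
    have hij : i < j := lt_of_le_of_ne hjr.1 (by rintro rfl; exact hjΔ hiΔ)
    -- minimality of j
    have hminj : ∀ u, i ≤ u → u < j → u ∈ Δ := by
      intro u hiu huj
      by_contra huΔ
      have hu : u ∈ (List.range' i (ℓ - i)).filter (fun x => x ∉ Δ) := by
        rw [List.mem_filter, List.mem_range']
        exact ⟨⟨u - i, by omega, by omega⟩, by simpa using huΔ⟩
      rw [hTcase] at hu
      rcases List.mem_cons.mp hu with rfl | hu
      · omega
      · have hpair : List.Pairwise (· < ·) (j :: tl) := by
          rw [← hTcase]
          exact List.Pairwise.sublist List.filter_sublist (List.pairwise_lt_range' (s := i) (n := ℓ - i) 1)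
        have := (List.pairwise_cons.mp hpair).1 u hu
        omega
    -- burst bound: j - i ≤ b - 1
    have hjb : j - i ≤ b - 1 := by
      by_contra hjb
      exact hno ⟨i, fun u hu => hminj (i + u) (by omega) (by omega)⟩
    -- CDB contradiction
    have hne := hs i j hij hjb (by omega)
    apply hne
    have hwi : window s i 1 = [s[i]'(by omega)] := by
      unfold window
      exact List.take_one_drop_eq_of_lt_length (by omega)
    have hwj : window s j 1 = [s[j]'(by omega)] := by
      unfold window
      exact List.take_one_drop_eq_of_lt_length (by omega)
    have : s[j]? = some (s[i]'(by omega)) := eΔ.symm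
    rw [List.getElem?_eq_getElem (show j < s.length by omega)] at this
    rw [hwi, hwj, Option.some_inj.mp this]

lemma hdist_eq_sum {B : Type*} [DecidableEq B] (x : List B) : ∀ (y : List B),
    x.length = y.length →
    hdist x y = ∑ m ∈ Finset.range x.length, (if x[m]? = y[m]? then 0 else 1) := by
  induction x with
  | nil => intro y h; simp [hdist]
  | cons a x ih =>
    intro y h
    cases y with
    | nil => simp at h
    | cons b y =>
      have h' : x.length = y.length := by simpa using h
      have hd : hdist (a :: x) (b :: y) = (if a = b then 0 else 1) + hdist x y := by
        simp [hdist]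
      rw [hd, ih y h', List.length_cons, Finset.sum_range_succ']
      simp [Nat.add_comm]

lemma foldr_card_le (w : ℕ) (l : List (ℕ × ℕ)) (hw : ∀ p ∈ l, p.2 ≤ w) :
    (l.foldr (fun p acc => Finset.Ico p.1 (p.1 + p.2) ∪ acc) ∅).card ≤ l.length * w := by
  induction l with
  | nil => simp
  | cons p l ih =>
    simp only [List.foldr_cons, List.length_cons]
    calc (Finset.Ico p.1 (p.1 + p.2) ∪ _).card
        ≤ (Finset.Ico p.1 (p.1 + p.2)).card
          + (l.foldr (fun p acc => Finset.Ico p.1 (p.1 + p.2) ∪ acc) ∅).card :=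
          Finset.card_union_le _ _
      _ ≤ w + l.length * w := by
          have h1 : (Finset.Ico p.1 (p.1 + p.2)).card = p.2 := by
            rw [Nat.card_Ico]; omega
          have h2 := ih (fun q hq => hw q (List.mem_cons_of_mem p hq))
          have h3 := hw p List.mem_cons_self
          omega
      _ = (l.length + 1) * w := by ring

theorem stmt15 {A B : Type*} [DecidableEq B] (b t₁ ℓ : ℕ) (hb : 2 ≤ b) (ht₁ : 1 ≤ t₁)
    (s : List A) (hslen : s.length = ℓ) (hs : IsCDB s b 1)
    (C : Set (List B)) (hClen : ∀ c ∈ C, c.length = ℓ)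
    (hCdist : ∀ c ∈ C, ∀ c' ∈ C, c ≠ c' → t₁ * (b - 1) + 1 ≤ hdist c c')
    (c c' : List B) (hc : c ∈ C) (hc' : c' ∈ C)
    (Δ Δ' : Finset ℕ)
    (hΔ : IsBurstSet Δ t₁ (b - 1) ℓ) (hΔ' : IsBurstSet Δ' t₁ (b - 1) ℓ)
    (heq : erasePos (c.zip s) Δ = erasePos (c'.zip s) Δ') :
    c = c' ∧ Δ = Δ' := by
  have hcl : c.length = ℓ := hClen c hc
  have hc'l : c'.length = ℓ := hClen c' hc'
  have hcs : c.length = s.length := by rw [hcl, hslen]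
  have hc's : c'.length = s.length := by rw [hc'l, hslen]
  -- second projection
  have hsnd : erasePos s Δ = erasePos s Δ' := by
    rw [← erasePos_zip_snd c s hcs Δ, ← erasePos_zip_snd c' s hc's Δ', heq]
  -- Δ = Δ'
  have hΔeq : Δ = Δ' := by
    by_contra hne
    have hnonempty : (symmDiff Δ Δ').Nonempty := by
      rw [Finset.nonempty_iff_ne_empty]
      intro h0
      exact hne (symmDiff_eq_bot.mp (by simpa using h0))
    set i := (symmDiff Δ Δ').min' hnonempty with hidef
    have hi : i ∈ symmDiff Δ Δ' := Finset.min'_mem _ _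
    have hmin : ∀ x, x < i → (x ∈ Δ ↔ x ∈ Δ') := by
      intro x hx
      by_contra hxc
      have hx' : x ∈ symmDiff Δ Δ' := by
        rw [Finset.mem_symmDiff]; tauto
      have := Finset.min'_le _ x hx'
      omega
    rw [Finset.mem_symmDiff] at hi
    rcases hi with ⟨h1, h2⟩ | ⟨h1, h2⟩
    · exact key_lemma s b ℓ hslen hs Δ Δ' hΔ.2.1 hΔ.2.2 i h1 h2 hmin hsnd
    · exact key_lemma s b ℓ hslen hs Δ' Δ hΔ'.2.1 hΔ'.2.2 i h1 h2
        (fun x hx => (hmin x hx).symm) hsnd.symm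
  -- first projection
  have hfst : erasePos c Δ = erasePos c' Δ := by
    rw [← erasePos_zip_fst c s hcs Δ, ← erasePos_zip_fst c' s hc's Δ, heq, hΔeq]
  -- agreement on kept positions
  have hkept : ∀ i, i < ℓ → i ∉ Δ → getElem? c i = getElem? c' i := by
    intro i hiℓ hiΔ
    have hiK : i ∈ (List.range ℓ).filter (fun x => x ∉ Δ) := by
      rw [List.mem_filter, List.mem_range]
      exact ⟨hiℓ, by simpa using hiΔ⟩
    obtain ⟨m, hm⟩ := List.mem_iff_getElem?.mp hiK
    have hmemc : ∀ x ∈ (List.range ℓ).filter (fun x => x ∉ Δ), x < c.length := by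
      intro x hx; rw [hcl]; exact List.mem_range.mp (List.mem_of_mem_filter hx)
    have hmemc' : ∀ x ∈ (List.range ℓ).filter (fun x => x ∉ Δ), x < c'.length := by
      intro x hx; rw [hc'l]; exact List.mem_range.mp (List.mem_of_mem_filter hx)
    have e1 : (erasePos c Δ)[m]? = getElem? c i := by
      unfold erasePos
      rw [hcl, fm_getElem? c _ hmemc m, hm]
      simp
    have e2 : (erasePos c' Δ)[m]? = getElem? c' i := by
      unfold erasePos
      rw [hc'l, fm_getElem? c' _ hmemc' m, hm]
      simp
    rw [← e1, ← e2, hfst]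
  -- c = c'
  rcases eq_or_ne c c' with hcc | hcc
  · exact ⟨hcc, hΔeq⟩
  exfalso
  have hd := hCdist c hc c' hc' hcc
  have hcard : Δ.card ≤ t₁ * (b - 1) := by
    obtain ⟨⟨l, hl1, hl2, hl3⟩, _, _⟩ := hΔ
    rw [hl3]
    calc (l.foldr (fun p acc => Finset.Ico p.1 (p.1 + p.2) ∪ acc) ∅).card
        ≤ l.length * (b - 1) := foldr_card_le _ l hl2
      _ ≤ t₁ * (b - 1) := Nat.mul_le_mul_right _ hl1
  have hdle : hdist c c' ≤ Δ.card := by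
    rw [hdist_eq_sum c c' (by rw [hcl, hc'l])]
    calc (∑ m ∈ Finset.range c.length, if getElem? c m = getElem? c' m then 0 else 1)
        ≤ ∑ m ∈ Finset.range c.length, (if m ∈ Δ then 1 else 0) := by
          refine Finset.sum_le_sum fun m hm => ?_
          by_cases hmΔ : m ∈ Δ
          · simp only [hmΔ, if_true]
            split <;> omega
          · have := hkept m (by rw [← hcl]; exact Finset.mem_range.mp hm) hmΔ
            simp [hmΔ, this]
      _ = ∑ m ∈ Finset.range c.length ∩ Δ, 1 := Finset.sum_ite_mem _ _ _
      _ = (Finset.range c.length ∩ Δ).card := by simp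
      _ = Δ.card := by
          rw [Finset.inter_eq_right.mpr (by rw [hcl]; exact hΔ.2.1)]
  omega
end

section
/- Let Σ be a finite alphabet of size q, let b, k be integers with q^k ≥ b ≥ 2, and set ℓ = k + b − 2. Let x, x' ∈ Σ^n be (b,k)-constrained de Bruijn sequences with n ≥ ℓ. Suppose t ≥ 1 and j_1 ≤ j_2 ≤ ⋯ ≤ j_t and j'_1 ≤ j'_2 ≤ ⋯ ≤ j'_t are nondecreasing sequences of read positions in {1,…,n−ℓ+1} satisfying: j_1 = j'_1 = 1 (the first ℓ-symbol read is error-free), j_t = j'_t = n−ℓ+1 (the last ℓ-symbol read is not deleted), and j_{r+1} − j_r ≤ b−1 and j'_{r+1} − j'_r ≤ b−1 for all r (a repeated index corresponds to a sticky insertion and a gap of size g+1 to a burst of g ≤ b−2 deletions of ℓ-symbol reads). If x[j_r, j_r+ℓ−1] = x'[j'_r, j'_r+ℓ−1] for all 1 ≤ r ≤ t, then x = x' and j_r = j'_r for all r. In other words, a (b,k)-constrained de Bruijn sequence can be uniquely recovered in the acyclic ℓ-symbol read channel from any received sequence of ℓ-symbol reads corrupted by any number of sticky insertions and any number of bursts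 of deletions of length at most b−2. -/
-- windows determined by a prefix
lemma window_eq_of_take_eq {A : Type*} {x x' : List A} {m : ℕ} (h : x.take m = x'.take m)
    (i k : ℕ) (hik : i + k ≤ m) : window x i k = window x' i k := by
  have key : ∀ s : List A, window s i k = ((s.take m).drop i).take k := by
    intro s
    rw [List.drop_take, List.take_take, window]
    congr 1
    omega
  rw [key, key, h]

lemma window_take {A : Type*} (s : List A) (i k l : ℕ) (h : k ≤ l) :
    (window s i l).take k = window s i k := by
  rw [window, window, List.take_take, min_eq_left h]

lemma key_lemma_s18 {A : Type*} {x x' : List A} {b k p i i' : ℕ} (hb : 2 ≤ b)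
    (hc : IsCDB x' b k)
    (htk : x.take (p + (k + b - 2)) = x'.take (p + (k + b - 2)))
    (hp : p ≤ i) (hd : i ≤ i') (hd' : i' - p ≤ b - 1)
    (hlen : i' + (k + b - 2) ≤ x'.length)
    (hw : window x i (k + b - 2) = window x' i' (k + b - 2)) : i = i' := by
  by_contra h
  have hlt : i < i' := lt_of_le_of_ne hd h
  have h1 : window x i k = window x' i k :=
    window_eq_of_take_eq htk i k (by omega)
  have h2 : window x i k = window x' i' k := by
    have := congrArg (List.take k) hw
    rwa [window_take _ _ _ _ (by omega), window_take _ _ _ _ (by omega)] at this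
  exact hc i i' hlt (by omega) (by omega) (h1.symm.trans h2)


theorem stmt18 {A : Type*} [Fintype A] (b k : ℕ) (hb : 2 ≤ b)
    (hq : b ≤ Fintype.card A ^ k)
    (n : ℕ) (hn : k + b - 2 ≤ n)
    (x x' : List A) (hx : x.length = n) (hx' : x'.length = n)
    (hxc : IsCDB x b k) (hx'c : IsCDB x' b k)
    (t : ℕ) (ht : 1 ≤ t) (j j' : ℕ → ℕ)
    -- the first ℓ-symbol read is error-free
    (hj0 : j 0 = 0) (hj'0 : j' 0 = 0)
    -- the last ℓ-symbol read is not deleted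
    (hjt : j (t - 1) = n - (k + b - 2)) (hj't : j' (t - 1) = n - (k + b - 2))
    -- nondecreasing read positions with gaps of at most b-1
    (hmono : ∀ r : ℕ, r + 1 < t → j r ≤ j (r + 1) ∧ j (r + 1) - j r ≤ b - 1)
    (hmono' : ∀ r : ℕ, r + 1 < t → j' r ≤ j' (r + 1) ∧ j' (r + 1) - j' r ≤ b - 1)
    -- the two received sequences of ℓ-symbol reads coincide
    (hread : ∀ r : ℕ, r < t →
        window x (j r) (k + b - 2) = window x' (j' r) (k + b - 2)) :
    x = x' ∧ ∀ r : ℕ, r < t → j r = j' r := by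
  have hk : 1 ≤ k := by
    rcases Nat.eq_zero_or_pos k with h | h
    · subst h; simp at hq; omega
    · exact h
  -- monotone chain lemma
  have mono : ∀ g : ℕ → ℕ, (∀ r, r + 1 < t → g r ≤ g (r + 1)) →
      ∀ s r, r ≤ s → s < t → g r ≤ g s := by
    intro g hg s
    induction s with
    | zero =>
      intro r hr _
      obtain rfl : r = 0 := Nat.le_zero.mp hr
      exact le_rfl
    | succ s ih =>
      intro r hr hst
      rcases Nat.lt_succ_iff_lt_or_eq.mp (Nat.lt_succ_of_le hr) with h | h
      · exact le_trans (ih r (by omega) (by omega)) (hg s hst)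
      · exact le_of_eq (congrArg g h)
  have monoj : ∀ r, r < t → j r ≤ n - (k + b - 2) := by
    intro r hr
    rw [← hjt]; exact mono j (fun r hr => (hmono r hr).1) (t - 1) r (by omega) (by omega)
  have monoj' : ∀ r, r < t → j' r ≤ n - (k + b - 2) := by
    intro r hr
    rw [← hj't]; exact mono j' (fun r hr => (hmono' r hr).1) (t - 1) r (by omega) (by omega)
  have main : ∀ r, r < t → j r = j' r ∧
      x.take (j r + (k + b - 2)) = x'.take (j r + (k + b - 2)) := by
    intro r
    induction r with
    | zero =>
      intro _
      refine ⟨by rw [hj0, hj'0], ?_⟩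
      have := hread 0 (by omega)
      rw [hj0, hj'0] at this
      rw [hj0]
      simpa [window] using this
    | succ r ih =>
      intro hr
      obtain ⟨he, htk⟩ := ih (by omega)
      obtain ⟨hm1, hm2⟩ := hmono r hr
      obtain ⟨hm'1, hm'2⟩ := hmono' r hr
      rw [← he] at hm'1 hm'2
      have hb1 : j (r + 1) ≤ n - (k + b - 2) := monoj (r + 1) hr
      have hb1' : j' (r + 1) ≤ n - (k + b - 2) := monoj' (r + 1) hr
      have hwr := hread (r + 1) hr
      have heq : j (r + 1) = j' (r + 1) := by
        rcases le_total (j (r + 1)) (j' (r + 1)) with hle | hle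
        · exact key_lemma_s18 hb hx'c htk hm1 hle (by omega) (by omega) hwr
        · exact (key_lemma_s18 hb hxc htk.symm hm'1 hle (by omega) (by omega) hwr.symm).symm
      refine ⟨heq, ?_⟩
      rw [List.take_add, List.take_add, ← window, ← window]
      have hti : x.take (j (r + 1)) = x'.take (j (r + 1)) := by
        have h0 := congrArg (List.take (j (r + 1))) htk
        rwa [List.take_take, List.take_take, inf_eq_left.mpr (show j (r+1) ≤ j r + (k + b - 2) by omega)] at h0
      rw [hti, hwr, heq]
  refine ⟨?_, fun r hr => (main r hr).1⟩
  have := (main (t - 1) (by omega)).2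
  rw [hjt] at this
  have hnn : n - (k + b - 2) + (k + b - 2) = n := by omega
  rw [hnn] at this
  rw [← List.take_length (l := x), ← List.take_length (l := x'), hx, hx']
  exact this
end

section
/- Let Σ be a finite alphabet of size q, let b, k be integers with q^k ≥ b ≥ 2, and set ℓ = k + b − 2. Let x, x' ∈ Σ^n be cyclic (b,k)-constrained de Bruijn sequences. Suppose t ≥ 1, and suppose 1 ≤ j_1 < j_2 < ⋯ < j_t ≤ n and 1 ≤ j'_1 < j'_2 < ⋯ < j'_t ≤ n are the retained read positions with multiplicities m_r ≥ 1 and m'_r ≥ 1 (each read repeated due to sticky insertions), satisfying the gap conditions j_{r+1} − j_r ≤ b−1 for 1 ≤ r < t and j_1 + n − j_t ≤ b−1, and likewise for the j'_r (so every burst of deleted ℓ-symbol reads, including a possible cyclic burst, has length at most b−2). If the two received lists of cyclic ℓ-symbol reads coincide, i.e., the concatenation over r of m_r copies of the cyclic window (x_{j_r}, x_{j_r+1}, …, x_{j_r+ℓ−1}) (indices mod n) equals the concatenation over r of m'_r copies of (x'_{j'_r}, …, x'_{j'_r+ℓ−1}), then x' is a cyclic shift of x. In other words, a cyclic (b,k)-constrained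 de Bruijn codeword can be recovered (up to cyclic shift, i.e., as a codeword of the cyclic code) in the ℓ-symbol read channel after any number of sticky insertions and any number of bursts of deletions of length at most b−2, including one possible cyclic burst. -/
/-- The cyclic window of `s` of length `w` starting at (0-based) position `i`,
with indices taken modulo the length of `s`. -/
def cycWin {A : Type*} [Inhabited A] (s : List A) (i w : ℕ) : List A :=
  (List.range w).map fun t => s.getD ((i + t) % s.length) default

/-- `x` is a cyclic `(b,k)`-constrained de Bruijn sequence: any two cyclic windows of
length `k` starting at positions at cyclic distance between `1` and `b-1` are distinct. -/
def IsCycCDB {A : Type*} [Inhabited A] (x : List A) (b k : ℕ) : Prop :=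
  ∀ i : ℕ, i < x.length → ∀ d : ℕ, 1 ≤ d → d ≤ b - 1 →
    cycWin x i k ≠ cycWin x ((i + d) % x.length) k

namespace Stmt19Aux

variable {A : Type*} [Inhabited A]

lemma cycWin_length (s : List A) (i w : ℕ) : (cycWin s i w).length = w := by
  simp [cycWin]

lemma cycWin_eq_iff (x y : List A) (i i' w : ℕ) :
    cycWin x i w = cycWin y i' w ↔
      ∀ t, t < w → x.getD ((i + t) % x.length) default
        = y.getD ((i' + t) % y.length) default := by
  constructor
  · intro h t ht
    have h1 : (cycWin x i w)[t]'(by simpa [cycWin_length] using ht)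
        = (cycWin y i' w)[t]'(by simpa [cycWin_length] using ht) :=
      List.getElem_of_eq h _
    simpa [cycWin] using h1
  · intro h
    apply List.ext_getElem (by simp [cycWin_length])
    intro t h1 h2
    have ht : t < w := by simpa [cycWin_length] using h1
    simpa [cycWin] using h t ht

lemma cycWin_mod (s : List A) (i w : ℕ) :
    cycWin s (i % s.length) w = cycWin s i w := by
  simp [cycWin, Nat.mod_add_mod]

lemma cycWin_sub {x y : List A} {i i' w o u : ℕ}
    (h : cycWin x i w = cycWin y i' w) (hou : o + u ≤ w) :
    cycWin x (i + o) u = cycWin y (i' + o) u := by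
  rw [cycWin_eq_iff] at h ⊢
  intro s hs
  have := h (o + s) (by omega)
  simpa [add_assoc] using this

def expand {α : Type*} (L : List (α × ℕ)) : List α :=
  (L.map fun p => List.replicate p.2 p.1).flatten

lemma expand_head {α : Type*} (a : α) (mm : ℕ) (T : List (α × ℕ)) (hm : 1 ≤ mm) :
    (expand ((a, mm) :: T)).head? = some a := by
  obtain ⟨m2, rfl⟩ : ∃ m2, mm = m2 + 1 := ⟨mm - 1, by omega⟩
  simp [expand, List.replicate_succ]

lemma repl_cancel {α : Type*} (a : α) :
    ∀ m m' (s s' : List α), s.head? ≠ some a → s'.head? ≠ some a →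
      List.replicate m a ++ s = List.replicate m' a ++ s' → m = m' ∧ s = s' := by
  intro m
  induction m with
  | zero =>
    intro m' s s' hs hs' h
    cases m' with
    | zero => simpa using h
    | succ m' =>
      exfalso
      apply hs
      rw [List.replicate_zero, List.nil_append] at h
      rw [h]
      simp [List.replicate_succ]
  | succ m ih =>
    intro m' s s' hs hs' h
    cases m' with
    | zero =>
      exfalso
      apply hs'
      rw [List.replicate_zero, List.nil_append] at h
      rw [← h]
      simp [List.replicate_succ]
    | succ m' =>
      simp only [List.replicate_succ, List.cons_append, List.cons.injEq] at h
      obtain ⟨-, h⟩ := h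
      obtain ⟨h1, h2⟩ := ih m' s s' hs hs' h
      exact ⟨by omega, h2⟩

lemma expand_head_ne {α : Type*} (p : α × ℕ) (T : List (α × ℕ))
    (hT : ∀ q ∈ T, 1 ≤ q.2)
    (hc : (p :: T).Chain' (fun p q => p.1 ≠ q.1)) : (expand T).head? ≠ some p.1 := by
  cases T with
  | nil => simp [expand]
  | cons q T2 =>
    have h1 := expand_head q.1 q.2 T2 (hT q (by simp))
    have h2 : p.1 ≠ q.1 := (List.isChain_cons_cons.mp hc).1
    rw [h1]
    intro hh
    exact h2 (Option.some_injective _ hh).symm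

lemma expand_inj {α : Type*} :
    ∀ (L L' : List (α × ℕ)), (∀ p ∈ L, 1 ≤ p.2) → (∀ p ∈ L', 1 ≤ p.2) →
      L.Chain' (fun p q => p.1 ≠ q.1) → L'.Chain' (fun p q => p.1 ≠ q.1) →
      expand L = expand L' → L.map Prod.fst = L'.map Prod.fst := by
  intro L
  induction L with
  | nil =>
    intro L' _ hL' _ _ h
    cases L' with
    | nil => rfl
    | cons p T =>
      exfalso
      have h1 := expand_head p.1 p.2 T (hL' p (by simp))
      rw [← h] at h1
      simp [expand] at h1
  | cons p T ih =>
    intro L' hL hL' hc hc' h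
    cases L' with
    | nil =>
      exfalso
      have h1 := expand_head p.1 p.2 T (hL p (by simp))
      rw [h] at h1
      simp [expand] at h1
    | cons q T' =>
      have hp : 1 ≤ p.2 := hL p (by simp)
      have hq : 1 ≤ q.2 := hL' q (by simp)
      have hhead : p.1 = q.1 := by
        have h1 := expand_head p.1 p.2 T hp
        have h2 := expand_head q.1 q.2 T' hq
        rw [h] at h1
        rw [h1] at h2
        exact Option.some_injective _ h2
      have hTne : (expand T).head? ≠ some p.1 :=
        expand_head_ne p T (fun r hr => hL r (by simp [hr])) hc
      have hT'ne : (expand T').head? ≠ some p.1 := by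
        rw [hhead]
        exact expand_head_ne q T' (fun r hr => hL' r (by simp [hr])) hc'
      have h' : List.replicate p.2 p.1 ++ expand T
          = List.replicate q.2 p.1 ++ expand T' := by
        have : expand (p :: T) = expand (q :: T') := h
        simpa [expand, hhead] using this
      obtain ⟨hmm, hE⟩ := repl_cancel p.1 p.2 q.2 (expand T) (expand T') hTne hT'ne h'
      have htl := ih T' (fun r hr => hL r (by simp [hr])) (fun r hr => hL' r (by simp [hr]))
        hc.tail hc'.tail hE
      simp [hhead, htl]

lemma gap_aux {n b k : ℕ} {x x' : List A} (hx' : x'.length = n) (hn : 0 < n)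
    (hx'c : IsCycCDB x' b k) {p p' d d' : ℕ} (hdd : d < d') (hd' : d' ≤ b - 1)
    (hW : cycWin x p (k + b - 2) = cycWin x' p' (k + b - 2))
    (hNext : cycWin x (p + d) k = cycWin x' (p' + d') k) : False := by
  have hE : cycWin x (p + d) k = cycWin x' (p' + d) k := cycWin_sub hW (by omega)
  have hF : cycWin x' (p' + d) k = cycWin x' (p' + d') k := hE.symm.trans hNext
  apply hx'c ((p' + d) % n) (by rw [hx']; exact Nat.mod_lt _ hn) (d' - d) (by omega) (by omega)
  rw [hx']
  have h1 : ((p' + d) % n + (d' - d)) % n = (p' + d') % n := by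
    rw [Nat.mod_add_mod]
    congr 1
    omega
  rw [h1]
  calc cycWin x' ((p' + d) % n) k = cycWin x' (p' + d) k := by
        rw [← hx']; exact cycWin_mod _ _ _
    _ = cycWin x' (p' + d') k := hF
    _ = cycWin x' ((p' + d') % n) k := by rw [← hx']; exact (cycWin_mod _ _ _).symm

end Stmt19Aux

open Stmt19Aux in
theorem stmt19 {A : Type*} [Fintype A] [Inhabited A] (b k : ℕ) (hb : 2 ≤ b)
    (hq : b ≤ Fintype.card A ^ k)
    (n : ℕ) (hn : 1 ≤ n)
    (x x' : List A) (hx : x.length = n) (hx' : x'.length = n)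
    (hxc : IsCycCDB x b k) (hx'c : IsCycCDB x' b k)
    (t : ℕ) (ht : 1 ≤ t)
    (j j' : ℕ → ℕ) (m m' : ℕ → ℕ)
    -- retained read positions, strictly increasing within {0,…,n-1}
    (hjlt : ∀ r : ℕ, r < t → j r < n) (hj'lt : ∀ r : ℕ, r < t → j' r < n)
    (hjmono : ∀ r : ℕ, r + 1 < t → j r < j (r + 1))
    (hj'mono : ∀ r : ℕ, r + 1 < t → j' r < j' (r + 1))
    -- multiplicities (sticky insertions) are at least one
    (hm : ∀ r : ℕ, r < t → 1 ≤ m r) (hm' : ∀ r : ℕ, r < t → 1 ≤ m' r)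
    -- every burst of deleted reads, including the cyclic one, has length at most b-2
    (hgap : ∀ r : ℕ, r + 1 < t → j (r + 1) - j r ≤ b - 1)
    (hgap' : ∀ r : ℕ, r + 1 < t → j' (r + 1) - j' r ≤ b - 1)
    (hcyc : j 0 + n - j (t - 1) ≤ b - 1)
    (hcyc' : j' 0 + n - j' (t - 1) ≤ b - 1)
    -- the two received lists of cyclic (k+b-2)-symbol reads coincide
    (hread :
      ((List.range t).map fun r =>
          List.replicate (m r) (cycWin x (j r) (k + b - 2))).flatten
        = ((List.range t).map fun r =>
            List.replicate (m' r) (cycWin x' (j' r) (k + b - 2))).flatten) :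
    ∃ d : ℕ, x' = x.rotate d := by
  classical
  -- k ≥ 1
  have hk1 : 1 ≤ k := by
    by_contra hk
    have hk0 : k = 0 := by omega
    rw [hk0, pow_zero] at hq
    omega
  -- n ≥ b
  have hbn : b ≤ n := by
    by_contra hbn
    have h0 : ((0 : ℕ) + n) % x.length = 0 := by rw [hx]; simp
    exact hxc 0 (by omega) n (by omega) (by omega) (by rw [h0])
  -- consecutive windows distinct
  have hWne : ∀ r, r + 1 < t → cycWin x (j r) (k + b - 2) ≠ cycWin x (j (r + 1)) (k + b - 2) := by
    intro r hr h
    have hpre : cycWin x (j r + 0) k = cycWin x (j (r + 1) + 0) k :=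
      cycWin_sub h (by omega)
    simp only [Nat.add_zero] at hpre
    have hd1 := hjmono r hr
    apply hxc (j r) (by rw [hx]; exact lt_trans hd1 (hjlt (r + 1) hr))
      (j (r + 1) - j r) (by omega) (hgap r hr)
    rw [hx]
    have e1 : j r + (j (r + 1) - j r) = j (r + 1) := by omega
    rw [e1, Nat.mod_eq_of_lt (hjlt (r + 1) hr)]
    exact hpre
  have hW'ne : ∀ r, r + 1 < t →
      cycWin x' (j' r) (k + b - 2) ≠ cycWin x' (j' (r + 1)) (k + b - 2) := by
    intro r hr h
    have hpre : cycWin x' (j' r + 0) k = cycWin x' (j' (r + 1) + 0) k :=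
      cycWin_sub h (by omega)
    simp only [Nat.add_zero] at hpre
    have hd1 := hj'mono r hr
    apply hx'c (j' r) (by rw [hx']; exact lt_trans hd1 (hj'lt (r + 1) hr)) (j' (r + 1) - j' r) (by omega) (hgap' r hr)
    rw [hx']
    have e1 : j' r + (j' (r + 1) - j' r) = j' (r + 1) := by omega
    rw [e1, Nat.mod_eq_of_lt (hj'lt (r + 1) hr)]
    exact hpre
  -- dedup: windows coincide
  obtain ⟨t1, rfl⟩ : ∃ t1, t = t1 + 1 := ⟨t - 1, by omega⟩
  have key := expand_inj
      ((List.range (t1 + 1)).map fun r => (cycWin x (j r) (k + b - 2), m r))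
      ((List.range (t1 + 1)).map fun r => (cycWin x' (j' r) (k + b - 2), m' r))
      (by
        intro p hp
        simp only [List.mem_map, List.mem_range] at hp
        obtain ⟨r, hr, rfl⟩ := hp
        exact hm r hr)
      (by
        intro p hp
        simp only [List.mem_map, List.mem_range] at hp
        obtain ⟨r, hr, rfl⟩ := hp
        exact hm' r hr)
      (by
        rw [List.Chain', List.isChain_map]
        rw [List.isChain_range_succ]
        intro r hr
        exact hWne r (by omega))
      (by
        rw [List.Chain', List.isChain_map]
        rw [List.isChain_range_succ]
        intro r hr
        exact hW'ne r (by omega))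
      (by simpa [expand, List.map_map, Function.comp_def] using hread)
  have hWW : ∀ r, r < t1 + 1 → cycWin x (j r) (k + b - 2) = cycWin x' (j' r) (k + b - 2) := by
    intro r hr
    have h1 : (((List.range (t1 + 1)).map fun r => (cycWin x (j r) (k + b - 2), m r)).map
          Prod.fst)[r]'(by simpa using hr)
        = (((List.range (t1 + 1)).map fun r => (cycWin x' (j' r) (k + b - 2), m' r)).map
          Prod.fst)[r]'(by simpa using hr) := List.getElem_of_eq key _
    simpa using h1
  set t := t1 + 1 with hts
  -- equal gaps
  have hgapeq : ∀ r, r + 1 < t → j (r + 1) - j r = j' (r + 1) - j' r := by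
    intro r hr
    have hd1 := hjmono r hr
    have hd1' := hj'mono r hr
    have hprev := hWW r (by omega)
    have hnexteq : cycWin x (j r + (j (r + 1) - j r)) k
        = cycWin x' (j' r + (j' (r + 1) - j' r)) k := by
      have hp := cycWin_sub (hWW (r + 1) hr) (show 0 + k ≤ k + b - 2 by omega)
      simp only [Nat.add_zero] at hp
      have e1 : j r + (j (r + 1) - j r) = j (r + 1) := by omega
      have e2 : j' r + (j' (r + 1) - j' r) = j' (r + 1) := by omega
      rw [e1, e2]
      exact hp
    rcases lt_trichotomy (j (r + 1) - j r) (j' (r + 1) - j' r) with h | h | h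
    · exact absurd (gap_aux hx' (by omega) hx'c h (hgap' r hr) hprev hnexteq) id
    · exact h
    · exact absurd (gap_aux hx (by omega) hxc h (hgap r hr) hprev.symm hnexteq.symm) id
  -- equal cyclic gap
  have hjt := hjlt (t - 1) (by omega)
  have hj't := hj'lt (t - 1) (by omega)
  have hj0 := hjlt 0 (by omega)
  have hj'0 := hj'lt 0 (by omega)
  have hcyceq : j 0 + n - j (t - 1) = j' 0 + n - j' (t - 1) := by
    have h0 := hWW 0 (by omega)
    have hlast := hWW (t - 1) (by omega)
    have hnexteq : cycWin x (j (t - 1) + (j 0 + n - j (t - 1))) k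
        = cycWin x' (j' (t - 1) + (j' 0 + n - j' (t - 1))) k := by
      have p0 := cycWin_sub h0 (show 0 + k ≤ k + b - 2 by omega)
      simp only [Nat.add_zero] at p0
      have e1 : j (t - 1) + (j 0 + n - j (t - 1)) = j 0 + n := by omega
      have e2 : j' (t - 1) + (j' 0 + n - j' (t - 1)) = j' 0 + n := by omega
      rw [e1, e2]
      calc cycWin x (j 0 + n) k = cycWin x ((j 0 + n) % x.length) k := (cycWin_mod _ _ _).symm
        _ = cycWin x (j 0) k := by
            rw [hx, Nat.add_mod_right, Nat.mod_eq_of_lt hj0]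
        _ = cycWin x' (j' 0) k := p0
        _ = cycWin x' ((j' 0 + n) % x'.length) k := by
            rw [hx', Nat.add_mod_right, Nat.mod_eq_of_lt hj'0]
        _ = cycWin x' (j' 0 + n) k := cycWin_mod _ _ _
    rcases lt_trichotomy (j 0 + n - j (t - 1)) (j' 0 + n - j' (t - 1)) with h | h | h
    · exact absurd (gap_aux hx' (by omega) hx'c h hcyc' hlast hnexteq) id
    · exact h
    · exact absurd (gap_aux hx (by omega) hxc h hcyc hlast.symm hnexteq.symm) id
  -- the shift
  set c := j 0 + n - j' 0 with hc
  have hjj : ∀ r, r < t → (j' r + c) % n = j r := by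
    intro r
    induction r with
    | zero =>
      intro _
      have e1 : j' 0 + c = j 0 + n := by omega
      rw [e1, Nat.add_mod_right, Nat.mod_eq_of_lt hj0]
    | succ r ih =>
      intro hr
      have ihr := ih (by omega)
      have hgeq := hgapeq r hr
      have hd1 := hjmono r hr
      have hd1' := hj'mono r hr
      have e1 : j' (r + 1) + c = j' r + c + (j (r + 1) - j r) := by omega
      rw [e1, ← Nat.mod_add_mod, ihr]
      have e2 : j r + (j (r + 1) - j r) = j (r + 1) := by omega
      rw [e2, Nat.mod_eq_of_lt (hjlt (r + 1) hr)]
  -- entrywise equality on windows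
  have hentry : ∀ r, r < t → ∀ s, s < k + b - 2 →
      x.getD ((j r + s) % n) default = x'.getD ((j' r + s) % n) default := by
    intro r hr s hs
    have h1 := (cycWin_eq_iff x x' (j r) (j' r) (k + b - 2)).mp (hWW r hr) s hs
    rwa [hx, hx'] at h1
  -- conclude
  refine ⟨c, ?_⟩
  apply List.ext_getElem (by simp [hx, hx'])
  intro u h1 h2
  have hu : u < n := by rwa [hx'] at h1
  set u0 := if j' 0 ≤ u then u else u + n with hu0def
  have hju0 : j' 0 ≤ u0 := by
    rw [hu0def]; split <;> omega
  have hu0lt : u0 < j' 0 + n := by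
    rw [hu0def]; split <;> omega
  have hu0mod : u0 % n = u := by
    rw [hu0def]; split
    · exact Nat.mod_eq_of_lt hu
    · rw [Nat.add_mod_right]; exact Nat.mod_eq_of_lt hu
  set r := Nat.findGreatest (fun r => j' r ≤ u0) (t - 1) with hrdef
  have hrt : r < t := by
    have h5 := Nat.findGreatest_le (P := fun i => j' i ≤ u0) (t - 1)
    rw [← hrdef] at h5
    omega
  have hjru0 : j' r ≤ u0 := by
    rw [hrdef]
    exact Nat.findGreatest_spec (P := fun i => j' i ≤ u0) (m := 0) (by omega) hju0
  have hs : u0 - j' r < k + b - 2 := by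
    by_cases hcase : r = t - 1
    · rw [hcase] at hjru0 ⊢
      omega
    · have hr1 : r + 1 ≤ t - 1 := by omega
      have hlt : Nat.findGreatest (fun i => j' i ≤ u0) (t - 1) < r + 1 := by
        rw [← hrdef]; omega
      have hnp := Nat.findGreatest_is_greatest (P := fun i => j' i ≤ u0) hlt hr1
      simp only [not_le] at hnp
      have := hgap' r (by omega)
      have := hj'mono r (by omega)
      omega
  have heq := hentry r hrt (u0 - j' r) hs
  have e3 : j' r + (u0 - j' r) = u0 := by omega
  rw [e3, hu0mod] at heq
  have e4 : (j r + (u0 - j' r)) % n = (u + c) % n := by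
    rw [← hjj r hrt, Nat.mod_add_mod]
    conv_rhs => rw [← hu0mod]
    rw [Nat.mod_add_mod]
    congr 1
    omega
  rw [e4] at heq
  have hb1 : (u + c) % x.length < x.length := Nat.mod_lt _ (by omega)
  calc x'[u] = x'.getD u default := (List.getD_eq_getElem x' default h1).symm
    _ = x.getD ((u + c) % n) default := heq.symm
    _ = x.getD ((u + c) % x.length) default := by rw [hx]
    _ = x[(u + c) % x.length]'hb1 := List.getD_eq_getElem x default hb1
    _ = (x.rotate c)[u]'h2 := (List.getElem_rotate x c u h2).symm
end
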